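/- arXiv:1108.0344 — 5 statements merged into one kernel-verified Lean document; each statement's English description precedes it below -/
import Mathlib

section
/- Let λ = m + ξ + it where m ∈ 2ℤ (an even integer), ξ, t ∈ ℝ with |ξ| < 1 and ξ² + t² > 0 (so that λ ∉ 2ℤ). Then a(λ) := Σ_{k ∈ 2ℤ} 1/|λ − k|² satisfies a(λ) ≤ 1/(ξ² + t²) + 8/(1 + 2|t|). -/
open Complex Real

lemma tele (s : ℝ) (hs : 0 ≤ s) (N : ℕ) :
    ∑ n ∈ Finset.Icc 2 (N+1), 2 / (2*(n:ℝ) - 1 + s)^2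
      ≤ 1/(2+s) - 1/(2*((N:ℝ)+1)+s) := by
  induction N with
  | zero => simp
  | succ N ih =>
    rw [Finset.sum_Icc_succ_top (by omega)]
    have hN : (0:ℝ) ≤ (N:ℝ) := Nat.cast_nonneg N
    have h2 : (0:ℝ) < 2*((N:ℝ)+1) + s := by positivity
    have h3 : (0:ℝ) < 2*((N:ℝ)+2) + s := by positivity
    have h1 : (0:ℝ) < 2*((N:ℝ)+2) - 1 + s := by linarith
    have key : 2 / (2*((N:ℝ)+2) - 1 + s)^2
        ≤ 1/(2*((N:ℝ)+1)+s) - 1/(2*((N:ℝ)+2)+s) := by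
      rw [div_sub_div _ _ h2.ne' h3.ne', div_le_div_iff₀ (by positivity) (mul_pos h2 h3)]
      nlinarith [sq_nonneg (2*(N:ℝ)+3+s)]
    push_cast
    push_cast at ih
    have e : ((N:ℝ)+1+1) = (N:ℝ)+2 := by ring
    rw [e]
    linarith

lemma natsum_bound (s : ℝ) (hs : 0 ≤ s) (v : Finset ℕ) (hv : 0 ∉ v) :
    ∑ n ∈ v, 2 / (2*(n:ℝ) - 1 + s)^2 ≤ 4/(1+2*s) := by
  set N := v.sup id with hN
  have hsub : v ⊆ Finset.Icc 1 (N+1) := by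
    intro x hx
    have hx1 : x ≠ 0 := fun h => hv (h ▸ hx)
    have hx2 : x ≤ N := Finset.le_sup (f := id) hx
    exact Finset.mem_Icc.mpr ⟨by omega, by omega⟩
  have hmono : ∑ n ∈ v, 2 / (2*(n:ℝ) - 1 + s)^2
      ≤ ∑ n ∈ Finset.Icc 1 (N+1), 2 / (2*(n:ℝ) - 1 + s)^2 := by
    apply Finset.sum_le_sum_of_subset_of_nonneg hsub
    intro i hi _
    have : (1:ℝ) ≤ (i:ℝ) := by exact_mod_cast (Finset.mem_Icc.mp hi).1
    have : (0:ℝ) < 2*(i:ℝ) - 1 + s := by linarith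
    positivity
  have hins : Finset.Icc 1 (N+1) = insert 1 (Finset.Icc 2 (N+1)) := by
    ext x; simp [Finset.mem_Icc, Finset.mem_insert]; omega
  have hsplit : ∑ n ∈ Finset.Icc 1 (N+1), 2 / (2*(n:ℝ) - 1 + s)^2
      = 2/(1+s)^2 + ∑ n ∈ Finset.Icc 2 (N+1), 2 / (2*(n:ℝ) - 1 + s)^2 := by
    rw [hins, Finset.sum_insert (by simp)]
    norm_num
  have htail := tele s hs N
  have htailpos : (0:ℝ) ≤ 1/(2*((N:ℝ)+1)+s) := by positivity
  have hfin : 2/(1+s)^2 + 1/(2+s) ≤ 4/(1+2*s) := by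
    have ha : 2/(1+s)^2 ≤ 2/(1+2*s) := by
      rw [div_le_div_iff₀ (by positivity) (by positivity)]
      nlinarith [sq_nonneg s]
    have hb : 1/(2+s) ≤ 2/(1+2*s) := by
      rw [div_le_div_iff₀ (by positivity) (by positivity)]
      linarith
    have hr : (2:ℝ)/(1+2*s)+2/(1+2*s) = 4/(1+2*s) := by ring
    linarith
  linarith

lemma point_bound (ξ t : ℝ) (hξ : |ξ| < 1) (j : ℤ) (hj : j ≠ 0) :
    1 / ((ξ - 2*(j:ℝ))^2 + t^2) ≤ 2 / (2*((j.natAbs:ℕ):ℝ) - 1 + |t|)^2 := by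
  have hna : ((j.natAbs:ℕ):ℝ) = |(j:ℝ)| := by
    rw [Nat.cast_natAbs, Int.cast_abs]
  have hj1 : (1:ℝ) ≤ |(j:ℝ)| := by
    rw [← Int.cast_abs]; exact_mod_cast Int.one_le_abs hj
  have hb : 2*|(j:ℝ)| - 1 ≤ |ξ - 2*(j:ℝ)| := by
    have h := abs_sub_abs_le_abs_sub (2*(j:ℝ)) ξ
    rw [abs_sub_comm] at h
    have h2 : |2*(j:ℝ)| = 2*|(j:ℝ)| := by rw [abs_mul]; norm_num
    linarith
  have ht : (0:ℝ) ≤ |t| := abs_nonneg t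
  have hd : (0:ℝ) < 2*|(j:ℝ)| - 1 + |t| := by linarith
  have hsq : (2*|(j:ℝ)| - 1 + |t|)^2 ≤ 2*((ξ - 2*(j:ℝ))^2 + t^2) := by
    nlinarith [_root_.sq_abs (ξ - 2*(j:ℝ)), _root_.sq_abs t, sq_nonneg (|ξ - 2*(j:ℝ)| - |t|),
      abs_nonneg (ξ - 2*(j:ℝ))]
  have hden : (0:ℝ) < (ξ - 2*(j:ℝ))^2 + t^2 := by
    nlinarith [_root_.sq_abs (ξ - 2*(j:ℝ)), sq_nonneg t]
  rw [hna, div_le_div_iff₀ hden (by positivity)]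
  linarith

/-- For `λ = m + ξ + it` with `m` an even integer, `|ξ| < 1` and
`ξ² + t² > 0` (so that `λ ∉ 2ℤ`), the sum `a(λ) = Σ_{k ∈ 2ℤ} 1/|λ - k|²` satisfies
`a(λ) ≤ 1/(ξ² + t²) + 8/(1 + 2|t|)`. -/
theorem stmt0 (m : ℤ) (hm : Even m) (ξ t : ℝ) (hξ : |ξ| < 1) (hpos : 0 < ξ ^ 2 + t ^ 2) :
    (∑' k : ℤ, 1 / ‖((m : ℂ) + ξ + t * Complex.I) - 2 * k‖ ^ 2) ≤
      1 / (ξ ^ 2 + t ^ 2) + 8 / (1 + 2 * |t|) := by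
  obtain ⟨m₀, hm₀⟩ := hm
  subst hm₀
  have ht : (0:ℝ) ≤ |t| := abs_nonneg t
  have hc : (0:ℝ) ≤ 1/(ξ^2+t^2) + 8/(1+2*|t|) := by positivity
  apply tsum_le_of_sum_le' hc
  intro u
  have habs : ∀ k : ℤ, (1:ℝ) / ‖(((m₀+m₀:ℤ):ℂ) + ξ + t * Complex.I) - 2*(k:ℂ)‖ ^ 2
      = 1 / ((ξ - 2*(((k - m₀ : ℤ)):ℝ))^2 + t^2) := by
    intro k
    congr 1
    rw [Complex.sq_norm, Complex.normSq_apply]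
    simp
    ring
  rw [Finset.sum_congr rfl (fun k _ => habs k)]
  have hre : ∑ k ∈ u, 1/((ξ - 2*(((k - m₀ : ℤ)):ℝ))^2 + t^2)
      = ∑ j ∈ u.image (· - m₀), 1/((ξ - 2*((j:ℤ):ℝ))^2 + t^2) := by
    rw [Finset.sum_image (by intro x _ y _ (h : x - m₀ = y - m₀); omega)]
  rw [hre]
  set w := u.image (· - m₀) with hw
  have hzero : ∑ j ∈ w, 1/((ξ - 2*((j:ℤ):ℝ))^2 + t^2)
      ≤ 1/(ξ^2+t^2) + ∑ j ∈ w.erase 0, 1/((ξ - 2*((j:ℤ):ℝ))^2 + t^2) := by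
    have hf0 : 1/((ξ - 2*(((0:ℤ)):ℝ))^2 + t^2) = 1/(ξ^2+t^2) := by norm_num
    by_cases h0 : (0:ℤ) ∈ w
    · rw [← Finset.add_sum_erase _ _ h0, hf0]
    · rw [Finset.erase_eq_of_notMem h0]
      have : (0:ℝ) ≤ 1/(ξ^2+t^2) := by positivity
      linarith
  have htail : ∑ j ∈ w.erase 0, 1/((ξ - 2*((j:ℤ):ℝ))^2 + t^2) ≤ 8/(1+2*|t|) := by
    have hstep : ∑ j ∈ w.erase 0, 1/((ξ - 2*((j:ℤ):ℝ))^2 + t^2)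
        ≤ ∑ j ∈ w.erase 0, 2/(2*((j.natAbs:ℕ):ℝ) - 1 + |t|)^2 := by
      apply Finset.sum_le_sum
      intro j hj
      exact point_bound ξ t hξ j (Finset.ne_of_mem_erase hj)
    have hsplit : ∑ j ∈ w.erase 0, 2/(2*((j.natAbs:ℕ):ℝ) - 1 + |t|)^2
        = ∑ j ∈ (w.erase 0).filter (0 < ·), 2/(2*((j.natAbs:ℕ):ℝ) - 1 + |t|)^2
        + ∑ j ∈ (w.erase 0).filter (¬ 0 < ·), 2/(2*((j.natAbs:ℕ):ℝ) - 1 + |t|)^2 :=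
      (Finset.sum_filter_add_sum_filter_not _ _ _).symm
    have hpart : ∀ P : Finset ℤ, (∀ x ∈ P, ∀ y ∈ P, x.natAbs = y.natAbs → x = y) →
        (∀ x ∈ P, x ≠ 0) →
        ∑ j ∈ P, 2/(2*((j.natAbs:ℕ):ℝ) - 1 + |t|)^2 ≤ 4/(1+2*|t|) := by
      intro P hinj hne
      rw [← Finset.sum_image (s := P) (g := Int.natAbs) (f := fun n : ℕ => (2/(2*(n:ℝ) - 1 + |t|)^2 : ℝ)) hinj]
      apply natsum_bound _ ht
      intro h0
      obtain ⟨x, hx, hx0⟩ := Finset.mem_image.mp h0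
      exact hne x hx (by omega)
    have hp := hpart ((w.erase 0).filter (0 < ·))
      (by intro x hx y hy h
          have hx' := (Finset.mem_filter.mp hx).2
          have hy' := (Finset.mem_filter.mp hy).2
          omega)
      (by intro x hx; exact Finset.ne_of_mem_erase (Finset.mem_filter.mp hx).1)
    have hn := hpart ((w.erase 0).filter (¬ 0 < ·))
      (by intro x hx y hy h
          have hx' := (Finset.mem_filter.mp hx).2
          have hy' := (Finset.mem_filter.mp hy).2
          omega)
      (by intro x hx; exact Finset.ne_of_mem_erase (Finset.mem_filter.mp hx).1)
    have hr : (4:ℝ)/(1+2*|t|) + 4/(1+2*|t|) = 8/(1+2*|t|) := by ring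
    linarith
  linarith
end

section
/- Let f, g : [0,π] → ℂ be continuous, and define F(x) = α₁ e^{iτ₁(π−x)} f(π−x) + β₁ e^{iτ₂(π−x)} g(π−x) and G(x) = α₂ e^{iτ₁x} f(x) + β₂ e^{iτ₂x} g(x). Then the pair (F, G) satisfies the boundary conditions F(0) + b·F(π) + a·G(0) = 0 and d·F(π) + c·G(0) + G(π) = 0 if and only if (f, g) satisfies the periodic boundary conditions f(0) = f(π) and g(0) = g(π). -/
open Complex Real

/-- In the setting of strictly regular or periodic type boundary
conditions, with `F, G` obtained from continuous `f, g` by the transform `A`, the pair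
`(F, G)` satisfies the boundary conditions `F(0) + b·F(π) + a·G(0) = 0`,
`d·F(π) + c·G(0) + G(π) = 0` if and only if `(f, g)` satisfies the periodic boundary
conditions `f(0) = f(π)`, `g(0) = g(π)`. -/
theorem stmt3 (a b c d z₁ z₂ τ₁ τ₂ α₁ α₂ β₁ β₂ : ℂ)
    (hreg : b * c - a * d ≠ 0)
    (hz₁ : z₁ ^ 2 + (b + c) * z₁ + (b * c - a * d) = 0)
    (hz₂ : z₂ ^ 2 + (b + c) * z₂ + (b * c - a * d) = 0)
    (hτ₁ : Complex.exp (Complex.I * Real.pi * τ₁) = z₁)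
    (hτ₂ : Complex.exp (Complex.I * Real.pi * τ₂) = z₂)
    (hα₁ : b * α₁ + a * α₂ = -z₁ * α₁) (hα₂ : d * α₁ + c * α₂ = -z₁ * α₂)
    (hβ₁ : b * β₁ + a * β₂ = -z₂ * β₁) (hβ₂ : d * β₁ + c * β₂ = -z₂ * β₂)
    (hdet : α₁ * β₂ - α₂ * β₁ ≠ 0)
    (f g : ℝ → ℂ)
    (hf : ContinuousOn f (Set.Icc 0 Real.pi)) (hg : ContinuousOn g (Set.Icc 0 Real.pi))
    (F G : ℝ → ℂ)
    (hF : ∀ x, F x = α₁ * Complex.exp (Complex.I * τ₁ * ((Real.pi : ℂ) - x)) * f (Real.pi - x)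
        + β₁ * Complex.exp (Complex.I * τ₂ * ((Real.pi : ℂ) - x)) * g (Real.pi - x))
    (hG : ∀ x, G x = α₂ * Complex.exp (Complex.I * τ₁ * x) * f x
        + β₂ * Complex.exp (Complex.I * τ₂ * x) * g x) :
    (F 0 + b * F Real.pi + a * G 0 = 0 ∧ d * F Real.pi + c * G 0 + G Real.pi = 0) ↔
      (f 0 = f Real.pi ∧ g 0 = g Real.pi) := by
  have hz1ne : z₁ ≠ 0 := hτ₁ ▸ Complex.exp_ne_zero _
  have hz2ne : z₂ ≠ 0 := hτ₂ ▸ Complex.exp_ne_zero _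
  have hF0 : F 0 = α₁ * z₁ * f Real.pi + β₁ * z₂ * g Real.pi := by
    rw [hF 0]
    rw [show Complex.I * τ₁ * ((Real.pi : ℂ) - (0:ℝ)) = Complex.I * Real.pi * τ₁ by
      push_cast; ring]
    rw [show Complex.I * τ₂ * ((Real.pi : ℂ) - (0:ℝ)) = Complex.I * Real.pi * τ₂ by
      push_cast; ring]
    rw [hτ₁, hτ₂, sub_zero]
  have hFπ : F Real.pi = α₁ * f 0 + β₁ * g 0 := by
    rw [hF Real.pi]
    rw [show Complex.I * τ₁ * ((Real.pi : ℂ) - (Real.pi:ℝ)) = 0 by push_cast; ring]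
    rw [show Complex.I * τ₂ * ((Real.pi : ℂ) - (Real.pi:ℝ)) = 0 by push_cast; ring]
    rw [Complex.exp_zero, sub_self]
    ring
  have hG0 : G 0 = α₂ * f 0 + β₂ * g 0 := by
    rw [hG 0]
    norm_num
  have hGπ : G Real.pi = α₂ * z₁ * f Real.pi + β₂ * z₂ * g Real.pi := by
    rw [hG Real.pi]
    rw [show Complex.I * τ₁ * ((Real.pi:ℝ):ℂ) = Complex.I * Real.pi * τ₁ by push_cast; ring]
    rw [show Complex.I * τ₂ * ((Real.pi:ℝ):ℂ) = Complex.I * Real.pi * τ₂ by push_cast; ring]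
    rw [hτ₁, hτ₂]
  rw [hF0, hFπ, hG0, hGπ]
  constructor
  · rintro ⟨h1, h2⟩
    have e1 : α₁ * (z₁ * (f Real.pi - f 0)) + β₁ * (z₂ * (g Real.pi - g 0)) = 0 := by
      linear_combination h1 - f 0 * hα₁ - g 0 * hβ₁
    have e2 : α₂ * (z₁ * (f Real.pi - f 0)) + β₂ * (z₂ * (g Real.pi - g 0)) = 0 := by
      linear_combination h2 - f 0 * hα₂ - g 0 * hβ₂
    have hu : (α₁ * β₂ - α₂ * β₁) * (z₁ * (f Real.pi - f 0)) = 0 := by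
      linear_combination β₂ * e1 - β₁ * e2
    have hv : (α₁ * β₂ - α₂ * β₁) * (z₂ * (g Real.pi - g 0)) = 0 := by
      linear_combination α₁ * e2 - α₂ * e1
    have hu' : f Real.pi - f 0 = 0 := by
      rcases mul_eq_zero.1 hu with h | h
      · exact absurd h hdet
      · rcases mul_eq_zero.1 h with h | h
        · exact absurd h hz1ne
        · exact h
    have hv' : g Real.pi - g 0 = 0 := by
      rcases mul_eq_zero.1 hv with h | h
      · exact absurd h hdet
      · rcases mul_eq_zero.1 h with h | h
        · exact absurd h hz2ne
        · exact h
    exact ⟨(sub_eq_zero.1 hu').symm, (sub_eq_zero.1 hv').symm⟩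
  · rintro ⟨h1, h2⟩
    constructor
    · linear_combination f 0 * hα₁ + g 0 * hβ₁ - α₁ * z₁ * h1 - β₁ * z₂ * h2
    · linear_combination f 0 * hα₂ + g 0 * hβ₂ - α₂ * z₁ * h1 - β₂ * z₂ * h2
end

section
/- There exists a constant C > 0, depending only on the boundary data (a, b, c, d, τ₁, τ₂, α's, β's, α′'s, β′'s), such that for all P, Q ∈ L²([0,π]) the following holds: for each η, ν ∈ {1,2} there is a sequence w^{ην} : 2ℤ → ℂ with ⟨V φ_k^ν, φ̃_j^η⟩ = w^{ην}(j + k) for all j, k ∈ 2ℤ, and Σ_{m∈2ℤ} |w^{ην}(m)|² ≤ C²·(‖P‖² + ‖Q‖²), where V(y₁, y₂) = (P·y₂, Q·y₁) and ‖P‖² = (1/π)∫₀^π |P(x)|² dx. In particular, the matrix elements of V in the basis {φ_k^ν} depend only on the sum j + k of the indices. -/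
open MeasureTheory Complex Real

/-- The eigenfunctions `φ_k^ν` (here `k ∈ ℤ` labels the even integer `2k`):
`φ_k¹(x) = (α₁ e^{iτ₁(π−x)} e^{−i(2k)x}, α₂ e^{iτ₁x} e^{i(2k)x})` and
`φ_k²(x) = (β₁ e^{iτ₂(π−x)} e^{−i(2k)x}, β₂ e^{iτ₂x} e^{i(2k)x})`. -/
noncomputable def phi (α₁ α₂ β₁ β₂ τ₁ τ₂ : ℂ) (ν : Fin 2) (k : ℤ) (x : ℝ) : ℂ × ℂ :=
  if ν = 0 then
    (α₁ * Complex.exp (Complex.I * τ₁ * ((Real.pi : ℂ) - x)) *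
        Complex.exp (-Complex.I * (2 * k : ℤ) * x),
     α₂ * Complex.exp (Complex.I * τ₁ * x) * Complex.exp (Complex.I * (2 * k : ℤ) * x))
  else
    (β₁ * Complex.exp (Complex.I * τ₂ * ((Real.pi : ℂ) - x)) *
        Complex.exp (-Complex.I * (2 * k : ℤ) * x),
     β₂ * Complex.exp (Complex.I * τ₂ * x) * Complex.exp (Complex.I * (2 * k : ℤ) * x))

/-- The biorthogonal functions `φ̃_j^η` (here `j ∈ ℤ` labels the even integer `2j`). -/
noncomputable def phit (α₁' α₂' β₁' β₂' τ₁ τ₂ : ℂ) (η : Fin 2) (j : ℤ) (x : ℝ) : ℂ × ℂ :=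
  if η = 0 then
    ((starRingEnd ℂ) α₁' * Complex.exp (Complex.I * (starRingEnd ℂ) τ₁ * ((Real.pi : ℂ) - x)) *
        Complex.exp (-Complex.I * (2 * j : ℤ) * x),
     (starRingEnd ℂ) α₂' * Complex.exp (Complex.I * (starRingEnd ℂ) τ₁ * x) *
        Complex.exp (Complex.I * (2 * j : ℤ) * x))
  else
    ((starRingEnd ℂ) β₁' * Complex.exp (Complex.I * (starRingEnd ℂ) τ₂ * ((Real.pi : ℂ) - x)) *
        Complex.exp (-Complex.I * (2 * j : ℤ) * x),
     (starRingEnd ℂ) β₂' * Complex.exp (Complex.I * (starRingEnd ℂ) τ₂ * x) *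
        Complex.exp (Complex.I * (2 * j : ℤ) * x))

noncomputable def mymu : Measure ℝ := (ENNReal.ofReal Real.pi)⁻¹ • (volume.restrict (Set.Icc 0 Real.pi))

instance : IsFiniteMeasure mymu := by
  constructor
  rw [mymu]
  simp only [Measure.smul_apply, Measure.restrict_apply MeasurableSet.univ, Set.univ_inter,
    Real.volume_Icc, smul_eq_mul, sub_zero]
  exact ENNReal.mul_lt_top (by simp [Real.pi_pos]) ENNReal.ofReal_lt_top

lemma integral_mymu (f : ℝ → ℂ) :
    ∫ x, f x ∂mymu = (Real.pi⁻¹ : ℂ) * ∫ x in (0:ℝ)..Real.pi, f x := by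
  rw [mymu, integral_smul_measure, intervalIntegral.integral_of_le Real.pi_pos.le,
    MeasureTheory.integral_Icc_eq_integral_Ioc]
  rw [ENNReal.toReal_inv, ENNReal.toReal_ofReal Real.pi_pos.le]
  rw [← Complex.ofReal_inv]
  simp [Complex.real_smul]

lemma integral_mymu_real (f : ℝ → ℝ) :
    ∫ x, f x ∂mymu = Real.pi⁻¹ * ∫ x in (0:ℝ)..Real.pi, f x := by
  rw [mymu, integral_smul_measure, intervalIntegral.integral_of_le Real.pi_pos.le,
    MeasureTheory.integral_Icc_eq_integral_Ioc,
    ENNReal.toReal_inv, ENNReal.toReal_ofReal Real.pi_pos.le, smul_eq_mul]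

noncomputable def eem (m : ℤ) (x : ℝ) : ℂ := Complex.exp (Complex.I * (2 * m : ℤ) * x)

lemma norm_eem (m : ℤ) (x : ℝ) : ‖eem m x‖ = 1 := by
  rw [eem, Complex.norm_exp]
  simp [Complex.mul_re]

lemma conj_eem (m : ℤ) (x : ℝ) : (starRingEnd ℂ) (eem m x) = eem (-m) x := by
  rw [eem, eem, ← Complex.exp_conj]
  congr 1
  simp only [map_mul, Complex.conj_I, map_intCast, Complex.conj_ofReal]
  push_cast; ring

lemma mem_eem (m : ℤ) : MemLp (eem m) 2 mymu :=
  (memLp_top_of_bound ((by unfold eem; fun_prop : Continuous (eem m)).aestronglyMeasurable) 1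
    (Filter.Eventually.of_forall fun x => (norm_eem m x).le)).mono_exponent le_top

noncomputable def myv (m : ℤ) : Lp ℂ 2 mymu := (mem_eem m).toLp (eem m)

lemma orth_myv : Orthonormal ℂ myv := by
  rw [orthonormal_iff_ite]
  intro m n
  have h1 : (inner ℂ (myv m) (myv n) : ℂ) = ∫ x, (starRingEnd ℂ) (eem m x) * eem n x ∂mymu := by
    rw [MeasureTheory.L2.inner_def]
    refine integral_congr_ae ?_
    filter_upwards [(mem_eem m).coeFn_toLp, (mem_eem n).coeFn_toLp] with x h h'
    rw [myv, myv, h, h', RCLike.inner_apply']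
  have h2 : ∀ x : ℝ, (starRingEnd ℂ) (eem m x) * eem n x = eem (n - m) x := by
    intro x
    rw [conj_eem, eem, eem, eem, ← Complex.exp_add]
    congr 1
    push_cast; ring
  rw [h1]
  simp_rw [h2]
  rw [integral_mymu]
  by_cases hmn : m = n
  · subst hmn
    simp only [sub_self, if_true]
    have : ∀ x : ℝ, eem 0 x = 1 := by intro x; simp [eem]
    simp_rw [this]
    rw [intervalIntegral.integral_const]
    simp [Real.pi_ne_zero]
  · simp only [hmn, if_false]
    have hc : (Complex.I * (2 * (n - m) : ℤ)) ≠ 0 := by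
      simp [Complex.I_ne_zero, sub_eq_zero, Ne.symm hmn]
    have : ∀ x : ℝ, eem (n - m) x = Complex.exp ((Complex.I * (2 * (n - m) : ℤ)) * x) := by
      intro x; rw [eem, mul_assoc]
    simp_rw [this]
    rw [integral_exp_mul_complex hc]
    have : Complex.exp (Complex.I * (2 * (n - m) : ℤ) * (Real.pi : ℝ)) = 1 := by
      have : (Complex.I * (2 * (n - m) : ℤ) * (Real.pi : ℝ)) = ((n - m : ℤ) : ℂ) * (2 * Real.pi * Complex.I) := by
        push_cast; ring
      rw [this, Complex.exp_int_mul_two_pi_mul_I]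
    rw [this]
    simp

lemma memmu {f : ℝ → ℂ} (hf : MemLp f 2 (volume.restrict (Set.Icc 0 Real.pi))) :
    MemLp f 2 mymu := by
  rw [mymu]; exact hf.smul_measure (by simp [Real.pi_pos])

lemma integrable_norm_sq_mu {f : ℝ → ℂ} (hf : MemLp f 2 mymu) :
    Integrable (fun x => ‖f x‖ ^ 2) mymu := by
  have := hf.integrable_norm_rpow two_ne_zero ENNReal.ofNat_ne_top
  simp only [ENNReal.toReal_ofNat] at this
  refine this.congr (Filter.Eventually.of_forall fun x => ?_)
  have : ((2:ℕ):ℝ) = (2:ℝ) := by norm_num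
  simp only [← this, Real.rpow_natCast]

lemma norm_toLp_sq {f : ℝ → ℂ} (hf : MemLp f 2 mymu) :
    ‖hf.toLp f‖ ^ 2 = ∫ x, ‖f x‖ ^ 2 ∂mymu := by
  rw [← inner_self_eq_norm_sq (𝕜 := ℂ), MeasureTheory.L2.inner_def]
  have h : (∫ x, (inner ℂ ((hf.toLp f : Lp ℂ 2 mymu) x) ((hf.toLp f : Lp ℂ 2 mymu) x) : ℂ) ∂mymu)
      = ∫ x, ((‖f x‖ ^ 2 : ℝ) : ℂ) ∂mymu := by
    refine integral_congr_ae ?_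
    filter_upwards [hf.coeFn_toLp] with x hx
    rw [hx, RCLike.inner_apply', mul_comm, Complex.mul_conj, Complex.normSq_eq_norm_sq]
  have h2 : (∫ x, ((‖f x‖ ^ 2 : ℝ) : ℂ) ∂mymu) = ((∫ x, ‖f x‖ ^ 2 ∂mymu : ℝ) : ℂ) :=
    integral_ofReal
  rw [h, h2]
  simp


lemma sq_norm_add_le (x y : ℂ) : ‖x + y‖ ^ 2 ≤ 2 * ‖x‖ ^ 2 + 2 * ‖y‖ ^ 2 := by
  nlinarith [pow_le_pow_left₀ (norm_nonneg (x + y)) (norm_add_le x y) 2,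
    sq_nonneg (‖x‖ - ‖y‖)]

lemma bound_combine {S nP nQ KA KB M C : ℝ} (h : S ≤ 2 * KA ^ 2 * nP + 2 * KB ^ 2 * nQ)
    (hKA : 0 ≤ KA) (hKB : 0 ≤ KB) (hMA : KA ≤ M) (hMB : KB ≤ M)
    (hnP : 0 ≤ nP) (hnQ : 0 ≤ nQ) (hC : 2 * M = C) :
    S ≤ C ^ 2 * (nP + nQ) := by
  subst hC
  nlinarith [mul_le_mul_of_nonneg_right (pow_le_pow_left₀ hKA hMA 2) hnP,
    mul_le_mul_of_nonneg_right (pow_le_pow_left₀ hKB hMB 2) hnQ,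
    mul_nonneg (sq_nonneg M) hnP, mul_nonneg (sq_nonneg M) hnQ]

lemma core (A B δ : ℂ) (P Q : ℝ → ℂ)
    (hP : MemLp P 2 (volume.restrict (Set.Icc 0 Real.pi)))
    (hQ : MemLp Q 2 (volume.restrict (Set.Icc 0 Real.pi))) :
    ∃ w : ℤ → ℂ,
      (∀ m : ℤ,
        (1 / (Real.pi : ℂ)) * ∫ x in (0:ℝ)..Real.pi,
          (A * P x * Complex.exp (Complex.I * δ * x) * eem m x
           + B * Q x * Complex.exp (-(Complex.I * δ * x)) * eem (-m) x) = w m) ∧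
      Summable (fun m : ℤ => ‖w m‖ ^ 2) ∧
      (∑' m : ℤ, ‖w m‖ ^ 2) ≤
        (2 * (‖A‖ + ‖B‖ + 1) * Real.exp (|δ.im| * Real.pi)) ^ 2 *
          ((1 / Real.pi) * (∫ x in (0:ℝ)..Real.pi, ‖P x‖ ^ 2) +
           (1 / Real.pi) * (∫ x in (0:ℝ)..Real.pi, ‖Q x‖ ^ 2)) := by
  set E : ℝ := Real.exp (|δ.im| * Real.pi) with hE
  have hEpos : 0 < E := Real.exp_pos _
  set fP : ℝ → ℂ := fun x => A * P x * Complex.exp (Complex.I * δ * x) with hfPdef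
  set fQ : ℝ → ℂ := fun x => B * Q x * Complex.exp (-(Complex.I * δ * x)) with hfQdef
  -- exponential bounds
  have hexpP : ∀ x ∈ Set.Icc (0:ℝ) Real.pi, ‖Complex.exp (Complex.I * δ * x)‖ ≤ E := by
    intro x hx
    rw [Complex.norm_exp, hE]
    apply Real.exp_le_exp.2
    have hre : (Complex.I * δ * x).re = -δ.im * x := by simp [Complex.mul_re]
    rw [hre]
    have h1 : -δ.im * x ≤ |δ.im| * x := by nlinarith [neg_abs_le δ.im, hx.1]
    have h2 : |δ.im| * x ≤ |δ.im| * Real.pi := by nlinarith [abs_nonneg δ.im, hx.2]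
    linarith
  have hexpQ : ∀ x ∈ Set.Icc (0:ℝ) Real.pi, ‖Complex.exp (-(Complex.I * δ * x))‖ ≤ E := by
    intro x hx
    rw [Complex.norm_exp, hE]
    apply Real.exp_le_exp.2
    have hre : (-(Complex.I * δ * x)).re = δ.im * x := by simp [Complex.mul_re]
    rw [hre]
    have h1 : δ.im * x ≤ |δ.im| * x := by nlinarith [le_abs_self δ.im, hx.1]
    have h2 : |δ.im| * x ≤ |δ.im| * Real.pi := by nlinarith [abs_nonneg δ.im, hx.2]
    linarith
  -- fP, fQ in L²(restrict)
  have haeP : ∀ᵐ x ∂(volume.restrict (Set.Icc 0 Real.pi)), ‖fP x‖ ≤ (‖A‖ * E) * ‖P x‖ := by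
    filter_upwards [ae_restrict_mem measurableSet_Icc] with x hx
    rw [hfPdef]
    simp only [norm_mul]
    calc ‖A‖ * ‖P x‖ * ‖Complex.exp (Complex.I * δ * x)‖
        ≤ ‖A‖ * ‖P x‖ * E :=
          mul_le_mul_of_nonneg_left (hexpP x hx)
            (mul_nonneg (norm_nonneg A) (norm_nonneg (P x)))
      _ = ‖A‖ * E * ‖P x‖ := by ring
  have haeQ : ∀ᵐ x ∂(volume.restrict (Set.Icc 0 Real.pi)), ‖fQ x‖ ≤ (‖B‖ * E) * ‖Q x‖ := by
    filter_upwards [ae_restrict_mem measurableSet_Icc] with x hx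
    rw [hfQdef]
    simp only [norm_mul]
    calc ‖B‖ * ‖Q x‖ * ‖Complex.exp (-(Complex.I * δ * x))‖
        ≤ ‖B‖ * ‖Q x‖ * E :=
          mul_le_mul_of_nonneg_left (hexpQ x hx)
            (mul_nonneg (norm_nonneg B) (norm_nonneg (Q x)))
      _ = ‖B‖ * E * ‖Q x‖ := by ring
  have hmP : MemLp fP 2 (volume.restrict (Set.Icc 0 Real.pi)) := by
    refine MemLp.of_le_mul hP ?_ haeP
    exact ((hP.aestronglyMeasurable.const_mul A).mul
      (Continuous.aestronglyMeasurable (by fun_prop)))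
  have hmQ : MemLp fQ 2 (volume.restrict (Set.Icc 0 Real.pi)) := by
    refine MemLp.of_le_mul hQ ?_ haeQ
    exact ((hQ.aestronglyMeasurable.const_mul B).mul
      (Continuous.aestronglyMeasurable (by fun_prop)))
  have hfP : MemLp fP 2 mymu := memmu hmP
  have hfQ : MemLp fQ 2 mymu := memmu hmQ
  set FP : Lp ℂ 2 mymu := hfP.toLp fP with hFP
  set FQ : Lp ℂ 2 mymu := hfQ.toLp fQ with hFQ
  refine ⟨fun m => (inner ℂ (myv (-m)) FP : ℂ) + (inner ℂ (myv m) FQ : ℂ), ?_, ?_, ?_⟩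
  · -- the integral identity
    intro m
    beta_reduce
    have e1 : (inner ℂ (myv (-m)) FP : ℂ) = ∫ x, eem m x * fP x ∂mymu := by
      rw [MeasureTheory.L2.inner_def]
      refine integral_congr_ae ?_
      filter_upwards [(mem_eem (-m)).coeFn_toLp, hfP.coeFn_toLp] with x h1 h2
      simp only [myv, hFP] at h1 h2 ⊢
      rw [h1, h2, RCLike.inner_apply', conj_eem, neg_neg]
    have e2 : (inner ℂ (myv m) FQ : ℂ) = ∫ x, eem (-m) x * fQ x ∂mymu := by
      rw [MeasureTheory.L2.inner_def]
      refine integral_congr_ae ?_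
      filter_upwards [(mem_eem m).coeFn_toLp, hfQ.coeFn_toLp] with x h1 h2
      simp only [myv, hFQ] at h1 h2 ⊢
      rw [h1, h2, RCLike.inner_apply', conj_eem]
    have iP : Integrable (fun x => eem m x * fP x) mymu := by
      refine (MeasureTheory.L2.integrable_inner (𝕜 := ℂ) (myv (-m)) FP).congr ?_
      filter_upwards [(mem_eem (-m)).coeFn_toLp, hfP.coeFn_toLp] with x h1 h2
      simp only [myv, hFP] at h1 h2 ⊢
      rw [h1, h2, RCLike.inner_apply', conj_eem, neg_neg]
    have iQ : Integrable (fun x => eem (-m) x * fQ x) mymu := by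
      refine (MeasureTheory.L2.integrable_inner (𝕜 := ℂ) (myv m) FQ).congr ?_
      filter_upwards [(mem_eem m).coeFn_toLp, hfQ.coeFn_toLp] with x h1 h2
      simp only [myv, hFQ] at h1 h2 ⊢
      rw [h1, h2, RCLike.inner_apply', conj_eem]
    have hptw : (∫ x in (0:ℝ)..Real.pi,
          (A * P x * Complex.exp (Complex.I * δ * x) * eem m x
           + B * Q x * Complex.exp (-(Complex.I * δ * x)) * eem (-m) x))
        = ∫ x in (0:ℝ)..Real.pi, (eem m x * fP x + eem (-m) x * fQ x) := by
      refine intervalIntegral.integral_congr fun x _ => ?_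
      simp only [hfPdef, hfQdef]
      ring
    rw [hptw, e1, e2, ← integral_add iP iQ, integral_mymu,
      show (1 / (Real.pi : ℂ)) = ((Real.pi⁻¹ : ℝ) : ℂ) from by push_cast; rw [one_div],
      Complex.ofReal_inv]
  · -- summability
    have bP : Summable (fun m : ℤ => ‖(inner ℂ (myv (-m)) FP : ℂ)‖ ^ 2) :=
      (orth_myv.inner_products_summable (x := FP)).comp_injective neg_injective
    have bQ : Summable (fun m : ℤ => ‖(inner ℂ (myv m) FQ : ℂ)‖ ^ 2) :=
      orth_myv.inner_products_summable (x := FQ)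
    refine Summable.of_nonneg_of_le (fun m => sq_nonneg _) (fun m => ?_)
      ((bP.mul_left 2).add (bQ.mul_left 2))
    exact sq_norm_add_le _ _
  · -- the bound
    have bP : Summable (fun m : ℤ => ‖(inner ℂ (myv (-m)) FP : ℂ)‖ ^ 2) :=
      (orth_myv.inner_products_summable (x := FP)).comp_injective neg_injective
    have bQ : Summable (fun m : ℤ => ‖(inner ℂ (myv m) FQ : ℂ)‖ ^ 2) :=
      orth_myv.inner_products_summable (x := FQ)
    have hwsum : Summable (fun m : ℤ =>
        ‖(inner ℂ (myv (-m)) FP : ℂ) + (inner ℂ (myv m) FQ : ℂ)‖ ^ 2) := by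
      refine Summable.of_nonneg_of_le (fun m => sq_nonneg _) (fun m => ?_)
        ((bP.mul_left 2).add (bQ.mul_left 2))
      exact sq_norm_add_le _ _
    have t1 : (∑' m : ℤ, ‖(inner ℂ (myv (-m)) FP : ℂ) + (inner ℂ (myv m) FQ : ℂ)‖ ^ 2)
        ≤ ∑' m : ℤ, (2 * ‖(inner ℂ (myv (-m)) FP : ℂ)‖ ^ 2 + 2 * ‖(inner ℂ (myv m) FQ : ℂ)‖ ^ 2) := by
      refine Summable.tsum_le_tsum (fun m => ?_) hwsum ((bP.mul_left 2).add (bQ.mul_left 2))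
      exact sq_norm_add_le _ _
    have t2 : (∑' m : ℤ, (2 * ‖(inner ℂ (myv (-m)) FP : ℂ)‖ ^ 2 + 2 * ‖(inner ℂ (myv m) FQ : ℂ)‖ ^ 2))
        = 2 * (∑' m : ℤ, ‖(inner ℂ (myv (-m)) FP : ℂ)‖ ^ 2)
          + 2 * (∑' m : ℤ, ‖(inner ℂ (myv m) FQ : ℂ)‖ ^ 2) := by
      rw [Summable.tsum_add (bP.mul_left 2) (bQ.mul_left 2), tsum_mul_left, tsum_mul_left]
    have t3 : (∑' m : ℤ, ‖(inner ℂ (myv (-m)) FP : ℂ)‖ ^ 2)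
        = ∑' m : ℤ, ‖(inner ℂ (myv m) FP : ℂ)‖ ^ 2 := by
      exact (Equiv.neg ℤ).tsum_eq (fun m => ‖(inner ℂ (myv m) FP : ℂ)‖ ^ 2)
    have besselP := orth_myv.tsum_inner_products_le FP
    have besselQ := orth_myv.tsum_inner_products_le FQ
    -- norms of FP, FQ
    have haeP2 : ∀ᵐ x ∂mymu, ‖fP x‖ ^ 2 ≤ (‖A‖ * E) ^ 2 * ‖P x‖ ^ 2 := by
      rw [mymu]
      refine Measure.ae_smul_measure ?_ _
      filter_upwards [haeP] with x hx
      nlinarith [norm_nonneg (fP x), norm_nonneg (P x)]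
    have haeQ2 : ∀ᵐ x ∂mymu, ‖fQ x‖ ^ 2 ≤ (‖B‖ * E) ^ 2 * ‖Q x‖ ^ 2 := by
      rw [mymu]
      refine Measure.ae_smul_measure ?_ _
      filter_upwards [haeQ] with x hx
      nlinarith [norm_nonneg (fQ x), norm_nonneg (Q x)]
    have hnP : ‖FP‖ ^ 2 ≤ (‖A‖ * E) ^ 2 * ∫ x, ‖P x‖ ^ 2 ∂mymu := by
      rw [hFP, norm_toLp_sq hfP]
      calc ∫ x, ‖fP x‖ ^ 2 ∂mymu ≤ ∫ x, (‖A‖ * E) ^ 2 * ‖P x‖ ^ 2 ∂mymu :=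
            integral_mono_ae (integrable_norm_sq_mu hfP)
              ((integrable_norm_sq_mu (memmu hP)).const_mul _) haeP2
        _ = (‖A‖ * E) ^ 2 * ∫ x, ‖P x‖ ^ 2 ∂mymu := integral_const_mul _ _
    have hnQ : ‖FQ‖ ^ 2 ≤ (‖B‖ * E) ^ 2 * ∫ x, ‖Q x‖ ^ 2 ∂mymu := by
      rw [hFQ, norm_toLp_sq hfQ]
      calc ∫ x, ‖fQ x‖ ^ 2 ∂mymu ≤ ∫ x, (‖B‖ * E) ^ 2 * ‖Q x‖ ^ 2 ∂mymu :=
            integral_mono_ae (integrable_norm_sq_mu hfQ)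
              ((integrable_norm_sq_mu (memmu hQ)).const_mul _) haeQ2
        _ = (‖B‖ * E) ^ 2 * ∫ x, ‖Q x‖ ^ 2 ∂mymu := integral_const_mul _ _
    have hiP : ∫ x, ‖P x‖ ^ 2 ∂mymu = Real.pi⁻¹ * ∫ x in (0:ℝ)..Real.pi, ‖P x‖ ^ 2 :=
      integral_mymu_real _
    have hiQ : ∫ x, ‖Q x‖ ^ 2 ∂mymu = Real.pi⁻¹ * ∫ x in (0:ℝ)..Real.pi, ‖Q x‖ ^ 2 :=
      integral_mymu_real _
    have hPnn : 0 ≤ ∫ x, ‖P x‖ ^ 2 ∂mymu := integral_nonneg fun x => sq_nonneg _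
    have hQnn : 0 ≤ ∫ x, ‖Q x‖ ^ 2 ∂mymu := integral_nonneg fun x => sq_nonneg _
    have hchain : (∑' m : ℤ, ‖(inner ℂ (myv (-m)) FP : ℂ) + (inner ℂ (myv m) FQ : ℂ)‖ ^ 2)
        ≤ 2 * (‖A‖ * E) ^ 2 * (∫ x, ‖P x‖ ^ 2 ∂mymu)
          + 2 * (‖B‖ * E) ^ 2 * (∫ x, ‖Q x‖ ^ 2 ∂mymu) := by
      have h4 := le_trans t1 (le_of_eq t2)
      rw [t3] at h4
      linarith
    have hS := bound_combine (M := (‖A‖ + ‖B‖ + 1) * E) (C := 2 * (‖A‖ + ‖B‖ + 1) * E)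
      hchain (mul_nonneg (norm_nonneg A) hEpos.le)
      (mul_nonneg (norm_nonneg B) hEpos.le)
      (mul_le_mul_of_nonneg_right (by linarith [norm_nonneg B] : ‖A‖ ≤ ‖A‖ + ‖B‖ + 1) hEpos.le)
      (mul_le_mul_of_nonneg_right (by linarith [norm_nonneg A] : ‖B‖ ≤ ‖A‖ + ‖B‖ + 1) hEpos.le)
      hPnn hQnn (by ring)
    rw [hiP, hiQ] at hS
    simp only [one_div]
    exact hS


lemma term1 (p γ d' σ ρ : ℂ) (j k : ℤ) (x : ℝ) :
    p * (γ * Complex.exp (Complex.I * σ * x) * Complex.exp (Complex.I * (2 * k : ℤ) * x)) *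
      (starRingEnd ℂ) ((starRingEnd ℂ) d' *
        Complex.exp (Complex.I * (starRingEnd ℂ) ρ * ((Real.pi : ℂ) - x)) *
        Complex.exp (-Complex.I * (2 * j : ℤ) * x))
    = (γ * d' * Complex.exp (-(Complex.I * ρ * (Real.pi : ℂ)))) * p *
        Complex.exp (Complex.I * (σ + ρ) * x) * eem (j + k) x := by
  have hc1 : (starRingEnd ℂ) (Complex.exp (Complex.I * (starRingEnd ℂ) ρ * ((Real.pi : ℂ) - x)))
      = Complex.exp (-(Complex.I * ρ * (Real.pi : ℂ)) + Complex.I * ρ * x) := by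
    rw [← Complex.exp_conj]
    congr 1
    simp only [map_mul, Complex.conj_I, map_sub, Complex.conj_conj, Complex.conj_ofReal]
    ring
  have hc2 : (starRingEnd ℂ) (Complex.exp (-Complex.I * (2 * j : ℤ) * x))
      = Complex.exp (Complex.I * (2 * j : ℤ) * x) := by
    rw [← Complex.exp_conj]
    congr 1
    simp only [map_mul, map_neg, Complex.conj_I, map_intCast, Complex.conj_ofReal]
    ring
  rw [map_mul, map_mul, Complex.conj_conj, hc1, hc2, Complex.exp_add,
    show Complex.I * (σ + ρ) * x = Complex.I * σ * x + Complex.I * ρ * x from by ring,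
    Complex.exp_add, eem,
    show Complex.I * ((2 * (j + k) : ℤ) : ℂ) * x
        = Complex.I * ((2 * k : ℤ) : ℂ) * x + Complex.I * ((2 * j : ℤ) : ℂ) * x from by
      push_cast; ring,
    Complex.exp_add]
  ring

lemma term2 (q γ d' σ ρ : ℂ) (j k : ℤ) (x : ℝ) :
    q * (γ * Complex.exp (Complex.I * σ * ((Real.pi : ℂ) - x)) *
        Complex.exp (-Complex.I * (2 * k : ℤ) * x)) *
      (starRingEnd ℂ) ((starRingEnd ℂ) d' *
        Complex.exp (Complex.I * (starRingEnd ℂ) ρ * x) *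
        Complex.exp (Complex.I * (2 * j : ℤ) * x))
    = (γ * d' * Complex.exp (Complex.I * σ * (Real.pi : ℂ))) * q *
        Complex.exp (-(Complex.I * (σ + ρ) * x)) * eem (-(j + k)) x := by
  have hc1 : (starRingEnd ℂ) (Complex.exp (Complex.I * (starRingEnd ℂ) ρ * x))
      = Complex.exp (-(Complex.I * ρ * x)) := by
    rw [← Complex.exp_conj]
    congr 1
    simp only [map_mul, Complex.conj_I, Complex.conj_conj, Complex.conj_ofReal]
    ring
  have hc2 : (starRingEnd ℂ) (Complex.exp (Complex.I * (2 * j : ℤ) * x))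
      = Complex.exp (-(Complex.I * (2 * j : ℤ) * x)) := by
    rw [← Complex.exp_conj]
    congr 1
    simp only [map_mul, Complex.conj_I, map_intCast, Complex.conj_ofReal]
    ring
  rw [map_mul, map_mul, Complex.conj_conj, hc1, hc2,
    show Complex.I * σ * ((Real.pi : ℂ) - x)
        = Complex.I * σ * (Real.pi : ℂ) + -(Complex.I * σ * x) from by ring,
    Complex.exp_add,
    show -(Complex.I * (σ + ρ) * x) = -(Complex.I * σ * x) + -(Complex.I * ρ * x) from by ring,
    Complex.exp_add, eem,
    show Complex.I * ((2 * -(j + k) : ℤ) : ℂ) * x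
        = -(Complex.I * ((2 * k : ℤ) : ℂ) * x) + -(Complex.I * ((2 * j : ℤ) : ℂ) * x) from by
      push_cast; ring,
    Complex.exp_add,
    show -Complex.I * ((2 * k : ℤ) : ℂ) * x = -(Complex.I * ((2 * k : ℤ) : ℂ) * x) from by ring]
  ring

lemma case_pt (Px Qx γ1 γ2 d1 d2 σ ρ : ℂ) (j k : ℤ) (x : ℝ) :
    Px * (γ2 * Complex.exp (Complex.I * σ * x) * Complex.exp (Complex.I * (2 * k : ℤ) * x)) *
      (starRingEnd ℂ) ((starRingEnd ℂ) d1 *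
        Complex.exp (Complex.I * (starRingEnd ℂ) ρ * ((Real.pi : ℂ) - x)) *
        Complex.exp (-Complex.I * (2 * j : ℤ) * x))
    + Qx * (γ1 * Complex.exp (Complex.I * σ * ((Real.pi : ℂ) - x)) *
        Complex.exp (-Complex.I * (2 * k : ℤ) * x)) *
      (starRingEnd ℂ) ((starRingEnd ℂ) d2 *
        Complex.exp (Complex.I * (starRingEnd ℂ) ρ * x) *
        Complex.exp (Complex.I * (2 * j : ℤ) * x))
    = (γ2 * d1 * Complex.exp (-(Complex.I * ρ * (Real.pi : ℂ)))) * Px *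
        Complex.exp (Complex.I * (σ + ρ) * x) * eem (j + k) x
      + (γ1 * d2 * Complex.exp (Complex.I * σ * (Real.pi : ℂ))) * Qx *
        Complex.exp (-(Complex.I * (σ + ρ) * x)) * eem (-(j + k)) x := by
  rw [term1, term2]

/-- For strictly regular boundary data there is a constant `C > 0`
(depending only on the boundary data) such that for all `P, Q ∈ L²([0,π])` and each
`η, ν ∈ {1,2}` there is a sequence `w^{ην} : 2ℤ → ℂ` with
`⟨Vφ_k^ν, φ̃_j^η⟩ = w^{ην}(j+k)` and `Σ_m |w^{ην}(m)|² ≤ C²(‖P‖² + ‖Q‖²)`,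
where `V(y₁,y₂) = (P y₂, Q y₁)`. -/
theorem stmt4 (a b c d z₁ z₂ τ₁ τ₂ α₁ α₂ β₁ β₂ α₁' α₂' β₁' β₂' : ℂ)
    (hreg : b * c - a * d ≠ 0)
    (hsr : (b - c) ^ 2 + 4 * a * d ≠ 0)
    (hz₁ : z₁ ^ 2 + (b + c) * z₁ + (b * c - a * d) = 0)
    (hz₂ : z₂ ^ 2 + (b + c) * z₂ + (b * c - a * d) = 0)
    (hzne : z₁ ≠ z₂)
    (hτ₁ : Complex.exp (Complex.I * Real.pi * τ₁) = z₁)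
    (hτ₂ : Complex.exp (Complex.I * Real.pi * τ₂) = z₂)
    (hτre : |τ₁.re - τ₂.re| ≤ 1)
    (hα₁ : b * α₁ + a * α₂ = -z₁ * α₁) (hα₂ : d * α₁ + c * α₂ = -z₁ * α₂)
    (hβ₁ : b * β₁ + a * β₂ = -z₂ * β₁) (hβ₂ : d * β₁ + c * β₂ = -z₂ * β₂)
    (hdet : α₁ * β₂ - α₂ * β₁ ≠ 0)
    (hinv₁ : α₁' * α₁ + α₂' * α₂ = 1) (hinv₂ : α₁' * β₁ + α₂' * β₂ = 0)
    (hinv₃ : β₁' * α₁ + β₂' * α₂ = 0) (hinv₄ : β₁' * β₁ + β₂' * β₂ = 1) :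
    ∃ C > 0, ∀ P Q : ℝ → ℂ,
      MemLp P 2 (volume.restrict (Set.Icc 0 Real.pi)) →
      MemLp Q 2 (volume.restrict (Set.Icc 0 Real.pi)) →
      ∀ η ν : Fin 2, ∃ w : ℤ → ℂ,
        (∀ j k : ℤ,
          (1 / (Real.pi : ℂ)) * ∫ x in (0 : ℝ)..Real.pi,
            (P x * (phi α₁ α₂ β₁ β₂ τ₁ τ₂ ν k x).2 *
                (starRingEnd ℂ) (phit α₁' α₂' β₁' β₂' τ₁ τ₂ η j x).1 +
             Q x * (phi α₁ α₂ β₁ β₂ τ₁ τ₂ ν k x).1 *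
                (starRingEnd ℂ) (phit α₁' α₂' β₁' β₂' τ₁ τ₂ η j x).2) = w (j + k)) ∧
        (Summable fun m : ℤ => ‖w m‖ ^ 2) ∧
        (∑' m : ℤ, ‖w m‖ ^ 2) ≤ C ^ 2 *
          ((1 / Real.pi) * (∫ x in (0 : ℝ)..Real.pi, ‖P x‖ ^ 2) +
           (1 / Real.pi) * (∫ x in (0 : ℝ)..Real.pi, ‖Q x‖ ^ 2)) := by
  refine ⟨max (max (2 * (‖α₂ * α₁' * Complex.exp (-(Complex.I * τ₁ * (Real.pi : ℂ)))‖ + ‖α₁ * α₂' * Complex.exp (Complex.I * τ₁ * (Real.pi : ℂ))‖ + 1) * Real.exp (|(τ₁ + τ₁).im| * Real.pi)) (2 * (‖β₂ * α₁' * Complex.exp (-(Complex.I * τ₁ * (Real.pi : ℂ)))‖ + ‖β₁ * α₂' * Complex.exp (Complex.I * τ₂ * (Real.pi : ℂ))‖ + 1) * Real.exp (|(τ₂ + τ₁).im| * Real.pi))) (max (2 * (‖α₂ * β₁' * Complex.exp (-(Complex.I * τ₂ * (Real.pi : ℂ)))‖ + ‖α₁ * β₂' * Complex.exp (Complex.I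 * τ₁ * (Real.pi : ℂ))‖ + 1) * Real.exp (|(τ₁ + τ₂).im| * Real.pi)) (2 * (‖β₂ * β₁' * Complex.exp (-(Complex.I * τ₂ * (Real.pi : ℂ)))‖ + ‖β₁ * β₂' * Complex.exp (Complex.I * τ₂ * (Real.pi : ℂ))‖ + 1) * Real.exp (|(τ₂ + τ₂).im| * Real.pi))), by positivity, ?_⟩
  intro P Q hP hQ η ν
  have hIP : 0 ≤ ∫ x in (0:ℝ)..Real.pi, ‖P x‖ ^ 2 :=
    intervalIntegral.integral_nonneg Real.pi_pos.le fun u _ => sq_nonneg _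
  have hIQ : 0 ≤ ∫ x in (0:ℝ)..Real.pi, ‖Q x‖ ^ 2 :=
    intervalIntegral.integral_nonneg Real.pi_pos.le fun u _ => sq_nonneg _
  have hS : 0 ≤ (1 / Real.pi) * (∫ x in (0:ℝ)..Real.pi, ‖P x‖ ^ 2) +
      (1 / Real.pi) * (∫ x in (0:ℝ)..Real.pi, ‖Q x‖ ^ 2) :=
    add_nonneg (mul_nonneg (by positivity) hIP) (mul_nonneg (by positivity) hIQ)
  fin_cases η <;> fin_cases ν
  · obtain ⟨w, hw1, hw2, hw3⟩ := core (α₂ * α₁' * Complex.exp (-(Complex.I * τ₁ * (Real.pi : ℂ)))) (α₁ * α₂' * Complex.exp (Complex.I * τ₁ * (Real.pi : ℂ))) (τ₁ + τ₁) P Q hP hQ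
    refine ⟨w, fun j k => ?_, hw2, ?_⟩
    · refine Eq.trans ?_ (hw1 (j + k))
      congr 1
      refine intervalIntegral.integral_congr fun x _ => ?_
      exact case_pt (P x) (Q x) α₁ α₂ α₁' α₂' τ₁ τ₁ j k x
    · refine le_trans hw3 (mul_le_mul_of_nonneg_right
        (pow_le_pow_left₀ (by positivity) ?_ 2) hS)
      exact (le_max_left _ _).trans (le_max_left _ _)
  · obtain ⟨w, hw1, hw2, hw3⟩ := core (β₂ * α₁' * Complex.exp (-(Complex.I * τ₁ * (Real.pi : ℂ)))) (β₁ * α₂' * Complex.exp (Complex.I * τ₂ * (Real.pi : ℂ))) (τ₂ + τ₁) P Q hP hQ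
    refine ⟨w, fun j k => ?_, hw2, ?_⟩
    · refine Eq.trans ?_ (hw1 (j + k))
      congr 1
      refine intervalIntegral.integral_congr fun x _ => ?_
      exact case_pt (P x) (Q x) β₁ β₂ α₁' α₂' τ₂ τ₁ j k x
    · refine le_trans hw3 (mul_le_mul_of_nonneg_right
        (pow_le_pow_left₀ (by positivity) ?_ 2) hS)
      exact (le_max_right _ _).trans (le_max_left _ _)
  · obtain ⟨w, hw1, hw2, hw3⟩ := core (α₂ * β₁' * Complex.exp (-(Complex.I * τ₂ * (Real.pi : ℂ)))) (α₁ * β₂' * Complex.exp (Complex.I * τ₁ * (Real.pi : ℂ))) (τ₁ + τ₂) P Q hP hQ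
    refine ⟨w, fun j k => ?_, hw2, ?_⟩
    · refine Eq.trans ?_ (hw1 (j + k))
      congr 1
      refine intervalIntegral.integral_congr fun x _ => ?_
      exact case_pt (P x) (Q x) α₁ α₂ β₁' β₂' τ₁ τ₂ j k x
    · refine le_trans hw3 (mul_le_mul_of_nonneg_right
        (pow_le_pow_left₀ (by positivity) ?_ 2) hS)
      exact (le_max_left _ _).trans (le_max_right _ _)
  · obtain ⟨w, hw1, hw2, hw3⟩ := core (β₂ * β₁' * Complex.exp (-(Complex.I * τ₂ * (Real.pi : ℂ)))) (β₁ * β₂' * Complex.exp (Complex.I * τ₂ * (Real.pi : ℂ))) (τ₂ + τ₂) P Q hP hQ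
    refine ⟨w, fun j k => ?_, hw2, ?_⟩
    · refine Eq.trans ?_ (hw1 (j + k))
      congr 1
      refine intervalIntegral.integral_congr fun x _ => ?_
      exact case_pt (P x) (Q x) β₁ β₂ β₁' β₂' τ₂ τ₂ j k x
    · refine le_trans hw3 (mul_le_mul_of_nonneg_right
        (pow_le_pow_left₀ (by positivity) ?_ 2) hS)
      exact (le_max_right _ _).trans (le_max_right _ _)
end

section
/- For every p ∈ (1,2) there is a constant C(p) > 0 such that: if r, g : 2ℤ → [0,∞) satisfy Σ_{k∈2ℤ} r(k)² < ∞ and Σ_{k∈2ℤ} g(k)^p < ∞, then for every even N ∈ 2ℕ one has σ₁(N) ≤ C(p)·‖r‖·‖g‖_p and σ₂(N) ≤ C(p)·‖r‖·‖g‖_p. -/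
open scoped BigOperators ENNReal
open MeasureTheory

/-- `σ₁(N) = Σ_{k∈2ℤ, |k|≤N} Σ_{j∈2ℤ, |j|>N} r(j+k)·g(k)/|j−k|`. -/
noncomputable def sigma1 (r g : ℤ → ℝ) (N : ℤ) : ℝ :=
  ∑' p : ℤ × ℤ, if Even p.1 ∧ Even p.2 ∧ |p.1| ≤ N ∧ N < |p.2|
    then r (p.2 + p.1) * g p.1 / (|p.2 - p.1| : ℤ) else 0

/-- `σ₂(N) = Σ_{k∈2ℤ, |k|>N} Σ_{j∈2ℤ, |j|≤N} r(j+k)·g(k)/|k−j|`. -/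
noncomputable def sigma2 (r g : ℤ → ℝ) (N : ℤ) : ℝ :=
  ∑' p : ℤ × ℤ, if Even p.1 ∧ Even p.2 ∧ N < |p.1| ∧ |p.2| ≤ N
    then r (p.2 + p.1) * g p.1 / (|p.1 - p.2| : ℤ) else 0

/-- `‖x‖ = (Σ_{k∈2ℤ} x(k)²)^{1/2}`. -/
noncomputable def evenL2Norm (x : ℤ → ℝ) : ℝ :=
  Real.sqrt (∑' k : ℤ, if Even k then x k ^ 2 else 0)

/-- `‖x‖_p = (Σ_{k∈2ℤ} x(k)^p)^{1/p}`. -/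
noncomputable def evenLpNorm (x : ℤ → ℝ) (p : ℝ) : ℝ :=
  (∑' k : ℤ, if Even k then x k ^ p else 0) ^ (1 / p)

lemma holder_tsum {p q : ℝ} (hpq : p.HolderConjugate q) (f g : ℤ → ℝ≥0∞) :
    ∑' k, f k * g k ≤ (∑' k, f k ^ p) ^ (1/p) * (∑' k, g k ^ q) ^ (1/q) := by
  have h := ENNReal.lintegral_mul_le_Lp_mul_Lq (Measure.count : Measure ℤ) hpq
    (f := f) (g := g) (Measurable.aemeasurable (by measurability)) (Measurable.aemeasurable (by measurability))
  simpa [lintegral_count] using h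

lemma real_le {f : ℤ × ℤ → ℝ} (hf : ∀ i, 0 ≤ f i) {c : ℝ} (hc : 0 ≤ c)
    (h : ∑' i, ENNReal.ofReal (f i) ≤ ENNReal.ofReal c) : ∑' i, f i ≤ c := by
  have h1 : ∑' i, f i = (∑' i, ENNReal.ofReal (f i)).toReal := by
    rw [ENNReal.tsum_toReal_eq (fun i => ENNReal.ofReal_ne_top)]
    exact tsum_congr fun i => (ENNReal.toReal_ofReal (hf i)).symm
  rw [h1, ← ENNReal.toReal_ofReal hc]
  exact ENNReal.toReal_mono ENNReal.ofReal_ne_top h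

lemma tail_nat_partial (d : ℝ) (hd : 2 ≤ d) (M : ℕ) :
    ∑ n ∈ Finset.range (M+1), ((d + 2*n)^2)⁻¹ ≤ d⁻¹ - (2*(d + 2*M))⁻¹ := by
  have hd0 : 0 < d := by linarith
  induction M with
  | zero =>
    simp only [Finset.range_one, Finset.sum_singleton, Nat.cast_zero]
    norm_num
    have h1 : (d^2)⁻¹ ≤ (2*d)⁻¹ := by
      apply inv_anti₀ (by positivity); nlinarith
    have h2 : d⁻¹ - (2*d)⁻¹ = (2*d)⁻¹ := by field_simp; ring
    have h3 : d⁻¹ - d⁻¹ * (1/2) = (2*d)⁻¹ := by field_simp; ring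
    rw [h3]; exact h1
  | succ M ih =>
    rw [Finset.sum_range_succ]
    have hx : (0:ℝ) < d + 2*M := by positivity
    have key : ((d + 2*(M:ℝ)+2)^2)⁻¹ ≤ (2*(d + 2*M))⁻¹ - (2*(d + 2*M+2))⁻¹ := by
      rw [inv_sub_inv (by positivity) (by positivity), le_div_iff₀ (by positivity),
        inv_mul_eq_div, div_le_iff₀ (by positivity)]
      nlinarith
    push_cast
    push_cast at ih
    calc ∑ n ∈ Finset.range (M+1), ((d + 2*n)^2)⁻¹ + ((d + 2*((M:ℝ)+1))^2)⁻¹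
        ≤ (d⁻¹ - (2*(d + 2*M))⁻¹) + ((2*(d + 2*M))⁻¹ - (2*(d + 2*M+2))⁻¹) := by
          apply add_le_add ih
          calc ((d + 2*((M:ℝ)+1))^2)⁻¹ = ((d + 2*(M:ℝ)+2)^2)⁻¹ := by ring_nf
            _ ≤ _ := key
      _ = d⁻¹ - (2*(d + 2*((M:ℝ)+1)))⁻¹ := by ring_nf

lemma tail_nat (d : ℝ) (hd : 2 ≤ d) :
    ∑' n : ℕ, ENNReal.ofReal (((d + 2*n)^2)⁻¹) ≤ ENNReal.ofReal d⁻¹ := by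
  have hd0 : 0 < d := by linarith
  have hnn : ∀ n : ℕ, 0 ≤ ((d + 2*(n:ℝ))^2)⁻¹ := fun n => by positivity
  have hpar : ∀ M : ℕ, ∑ n ∈ Finset.range M, ((d + 2*(n:ℝ))^2)⁻¹ ≤ d⁻¹ := by
    intro M
    cases M with
    | zero => simp; positivity
    | succ M =>
      refine (tail_nat_partial d hd M).trans ?_
      have : (0:ℝ) ≤ (2*(d + 2*(M:ℝ)))⁻¹ := by positivity
      linarith
  have hsum : Summable (fun n : ℕ => ((d + 2*(n:ℝ))^2)⁻¹) :=
    summable_of_sum_range_le hnn hpar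
  rw [← ENNReal.ofReal_tsum_of_nonneg hnn hsum]
  exact ENNReal.ofReal_le_ofReal (Real.tsum_le_of_sum_range_le hnn hpar)

lemma tail_int (d : ℤ) (hd : 2 ≤ d) (hde : Even d) :
    ∑' m : ℤ, (if Even m ∧ d ≤ m then ENNReal.ofReal ((((m:ℝ))^2)⁻¹) else 0)
      ≤ ENNReal.ofReal ((d:ℝ))⁻¹ := by
  set f : ℤ → ℝ≥0∞ := fun m => if Even m ∧ d ≤ m then ENNReal.ofReal ((((m:ℝ))^2)⁻¹) else 0 with hf
  have he : Function.Injective (fun n : ℕ => d + 2*(n:ℤ)) := by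
    intro a b hab; simpa using hab
  have hsupp : Function.support f ⊆ Set.range (fun n : ℕ => d + 2*(n:ℤ)) := by
    intro m hm
    simp only [Function.support, Set.mem_setOf_eq, hf] at hm
    by_cases hc : Even m ∧ d ≤ m
    · obtain ⟨⟨t, ht⟩, hdm⟩ := hc
      obtain ⟨u, hu⟩ := hde
      refine ⟨(t - u).toNat, ?_⟩
      have : (0:ℤ) ≤ t - u := by omega
      simp only []
      omega
    · simp [hc] at hm
  rw [← he.tsum_eq hsupp]
  refine le_trans (ENNReal.tsum_le_tsum (fun n => ?_)) (tail_nat (d:ℝ) (by exact_mod_cast hd))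
  show f (d + 2*(n:ℤ)) ≤ _
  have hc : Even (d + 2*(n:ℤ)) ∧ d ≤ d + 2*(n:ℤ) := ⟨by obtain ⟨u,hu⟩ := hde; exact ⟨u+n, by omega⟩, by omega⟩
  rw [hf]
  simp only [hc, and_self, if_true, if_pos hc]
  apply le_of_eq
  congr 1
  push_cast
  ring

lemma inj_sum_le (e : ℕ → ℤ) (he : Function.Injective e) (f : ℤ → ℝ≥0∞)
    (hsupp : ∀ m, f m ≠ 0 → ∃ n, e n = m)
    (g : ℕ → ℝ) (hg : ∀ n, 0 ≤ g n) (hgs : Summable g)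
    (hle : ∀ n, f (e n) ≤ ENNReal.ofReal (g n)) :
    ∑' m, f m ≤ ENNReal.ofReal (∑' n, g n) := by
  have hsupp' : Function.support f ⊆ Set.range e := by
    intro m hm; obtain ⟨n, hn⟩ := hsupp m hm; exact ⟨n, hn⟩
  rw [← he.tsum_eq hsupp', ENNReal.ofReal_tsum_of_nonneg hg hgs]
  exact ENNReal.tsum_le_tsum hle

lemma weight_summable {s : ℝ} (hs : 1 < s) :
    Summable (fun n : ℕ => (((2*(n:ℝ)+2)) ^ s)⁻¹) := by
  have h1 : Summable (fun n : ℕ => (((n:ℝ)+1) ^ s)⁻¹) := by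
    have := (Real.summable_nat_rpow_inv (p := s)).2 hs
    have h2 := (summable_nat_add_iff (f := fun n : ℕ => (((n:ℝ)) ^ s)⁻¹) 1).2 this
    refine h2.congr (fun n => by push_cast; ring_nf)
  refine h1.of_nonneg_of_le (fun n => by positivity) (fun n => ?_)
  apply inv_anti₀ (by positivity)
  apply Real.rpow_le_rpow (by positivity) (by linarith) (by linarith)

open Classical in
lemma core_s5 (p q s : ℝ) (hpq : p.HolderConjugate q) (hs : s = q/2) (Kr : ℝ) (hKr : 0 ≤ Kr)
    (R G : ℤ → ℝ≥0∞)
    (Pk Pj : ℤ → Prop)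
    (dk : ℤ → ℤ)
    (hdk : ∀ k, Pk k → 0 < dk k)
    (hPkE : ∀ k, Pk k → Even k)
    (hEv : ∀ k j, Pk k → Pj j → Even (j + k))
    (hne : ∀ k j, Pk k → Pj j → j ≠ k)
    (htail : ∀ k, Pk k → (∑' j : ℤ, if Pj j then ENNReal.ofReal ((((j:ℝ) - (k:ℝ))^2)⁻¹) else 0)
        ≤ ENNReal.ofReal (2 * ((dk k : ℝ))⁻¹))
    (hw : (∑' k : ℤ, if Pk k then ENNReal.ofReal ((((dk k : ℤ):ℝ)) ^ s)⁻¹ else 0)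
        ≤ ENNReal.ofReal (2 * Kr)) :
    (∑' z : ℤ × ℤ, if Pk z.1 ∧ Pj z.2 then
        R (z.2 + z.1) * G z.1 * (ENNReal.ofReal |(z.2:ℝ) - (z.1:ℝ)|)⁻¹ else 0)
      ≤ ENNReal.ofReal ((2^s * (2*Kr)) ^ (1/q))
        * (∑' k : ℤ, if Even k then R k ^ (2:ℝ) else 0) ^ ((1:ℝ)/2)
        * (∑' k : ℤ, if Even k then G k ^ p else 0) ^ (1/p) := by
  set A := ∑' k : ℤ, if Even k then R k ^ (2:ℝ) else 0 with hA
  set B := ∑' k : ℤ, if Even k then G k ^ p else 0 with hB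
  have hq1 : 1 < q := hpq.symm.lt
  have hq0 : 0 < q := by linarith
  have hs0 : 0 < s := by rw [hs]; positivity
  have hp0 : 0 < p := hpq.pos
  have h22 : (2:ℝ).HolderConjugate 2 := Real.HolderConjugate.two_two
  -- inner bound
  have inner : ∀ k, Pk k →
      (∑' j : ℤ, if Pj j then R (j + k) * (ENNReal.ofReal |(j:ℝ) - (k:ℝ)|)⁻¹ else 0)
        ≤ A ^ ((1:ℝ)/2) * (ENNReal.ofReal (2 * ((dk k : ℝ))⁻¹)) ^ ((1:ℝ)/2) := by
    intro k hk
    set u : ℤ → ℝ≥0∞ := fun j => if Pj j then R (j + k) else 0 with hu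
    set v : ℤ → ℝ≥0∞ := fun j => if Pj j then (ENNReal.ofReal |(j:ℝ) - (k:ℝ)|)⁻¹ else 0 with hv
    have h1 : ∀ j : ℤ, (if Pj j then R (j + k) * (ENNReal.ofReal |(j:ℝ) - (k:ℝ)|)⁻¹ else 0)
        = u j * v j := fun j => by by_cases hc : Pj j <;> simp [hu, hv, hc]
    have hu2 : ∑' j : ℤ, u j ^ (2:ℝ) ≤ A := by
      have step : ∀ j : ℤ, u j ^ (2:ℝ)
          ≤ (fun m => if Even m then R m ^ (2:ℝ) else 0) (j + k) := by
        intro j; by_cases hc : Pj j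
        · simp [hu, hc, hEv k j hk hc]
        · simp [hu, hc, ENNReal.zero_rpow_of_pos two_pos]
      refine le_trans (ENNReal.tsum_le_tsum step) (le_of_eq ?_)
      rw [hA]
      simpa using (Equiv.addRight k).tsum_eq (fun m => if Even m then R m ^ (2:ℝ) else 0)
    have hv2 : ∑' j : ℤ, v j ^ (2:ℝ) ≤ ENNReal.ofReal (2 * ((dk k : ℝ))⁻¹) := by
      refine le_trans (ENNReal.tsum_le_tsum (fun j => ?_)) (htail k hk)
      by_cases hc : Pj j
      · simp only [hv, hc, if_true]
        have hne' : (j:ℝ) - k ≠ 0 := sub_ne_zero.2 (by exact_mod_cast (Int.cast_injective.ne (hne k j hk hc) : ((j:ℤ):ℝ) ≠ k))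
        have habs : 0 < |(j:ℝ) - k| := abs_pos.2 hne'
        rw [← ENNReal.ofReal_inv_of_pos habs, ENNReal.ofReal_rpow_of_nonneg (by positivity) (by norm_num)]
        apply le_of_eq; congr 1
        rw [show ((2:ℝ)) = ((2:ℕ):ℝ) by norm_num, Real.rpow_natCast, inv_pow, sq_abs]
      · simp [hv, hc, ENNReal.zero_rpow_of_pos two_pos]
    calc (∑' j : ℤ, if Pj j then R (j + k) * (ENNReal.ofReal |(j:ℝ) - (k:ℝ)|)⁻¹ else 0)
        = ∑' j : ℤ, u j * v j := tsum_congr h1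
      _ ≤ (∑' j : ℤ, u j ^ (2:ℝ)) ^ ((1:ℝ)/2) * (∑' j : ℤ, v j ^ (2:ℝ)) ^ ((1:ℝ)/2) := by
          simpa using holder_tsum h22 u v
      _ ≤ A ^ ((1:ℝ)/2) * (ENNReal.ofReal (2 * ((dk k : ℝ))⁻¹)) ^ ((1:ℝ)/2) := by
          gcongr <;> norm_num
  -- outer part
  have hsplit : ∀ k : ℤ, (∑' j : ℤ, if Pk k ∧ Pj j then
        R (j + k) * G k * (ENNReal.ofReal |(j:ℝ) - (k:ℝ)|)⁻¹ else 0)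
      = (if Pk k then G k * (∑' j : ℤ, if Pj j then
          R (j + k) * (ENNReal.ofReal |(j:ℝ) - (k:ℝ)|)⁻¹ else 0) else 0) := by
    intro k
    by_cases hk : Pk k
    · simp only [hk, true_and, if_true]
      rw [← ENNReal.tsum_mul_left]
      refine tsum_congr (fun j => ?_)
      by_cases hj : Pj j
      · simp only [hj, if_true]; ring
      · simp [hj]
    · simp [hk]
  set a : ℤ → ℝ≥0∞ := fun k => if Pk k then G k else 0 with ha
  set b : ℤ → ℝ≥0∞ := fun k => if Pk k then
      (ENNReal.ofReal (2 * ((dk k : ℝ))⁻¹)) ^ ((1:ℝ)/2) else 0 with hb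
  have hap : ∑' k : ℤ, a k ^ p ≤ B := by
    refine le_trans (ENNReal.tsum_le_tsum (fun k => ?_)) (le_of_eq hB.symm)
    by_cases hk : Pk k
    · simp [ha, hk, hPkE k hk]
    · simp [ha, hk, ENNReal.zero_rpow_of_pos hp0]
  have hbq : ∑' k : ℤ, b k ^ q ≤ ENNReal.ofReal (2^s * (2*Kr)) := by
    have step : ∀ k : ℤ, b k ^ q ≤ ENNReal.ofReal (2^s)
        * (if Pk k then ENNReal.ofReal ((((dk k : ℤ):ℝ)) ^ s)⁻¹ else 0) := by
      intro k
      by_cases hk : Pk k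
      · have hdk0 : (0:ℝ) < ((dk k : ℤ):ℝ) := by exact_mod_cast hdk k hk
        simp only [hb, hk, if_true]
        rw [← ENNReal.rpow_mul]
        have : (1:ℝ)/2 * q = s := by rw [hs]; ring
        rw [this, ENNReal.ofReal_rpow_of_nonneg (by positivity) hs0.le]
        rw [Real.mul_rpow (by norm_num) (by positivity), Real.inv_rpow hdk0.le]
        rw [ENNReal.ofReal_mul (by positivity)]
      · simp [hb, hk, ENNReal.zero_rpow_of_pos hq0]
    refine le_trans (ENNReal.tsum_le_tsum step) ?_
    rw [ENNReal.tsum_mul_left]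
    calc ENNReal.ofReal (2^s) * (∑' k : ℤ, if Pk k then ENNReal.ofReal ((((dk k : ℤ):ℝ)) ^ s)⁻¹ else 0)
        ≤ ENNReal.ofReal (2^s) * ENNReal.ofReal (2*Kr) := mul_le_mul_right hw _
      _ = ENNReal.ofReal (2^s * (2*Kr)) := (ENNReal.ofReal_mul (by positivity)).symm
  rw [ENNReal.tsum_prod (f := fun k j : ℤ => if Pk k ∧ Pj j then R (j + k) * G k * (ENNReal.ofReal |(j:ℝ) - (k:ℝ)|)⁻¹ else 0)]
  calc ∑' k : ℤ, ∑' j : ℤ, (if Pk k ∧ Pj j then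
        R (j + k) * G k * (ENNReal.ofReal |(j:ℝ) - (k:ℝ)|)⁻¹ else 0)
      = ∑' k : ℤ, (if Pk k then G k * (∑' j : ℤ, if Pj j then
          R (j + k) * (ENNReal.ofReal |(j:ℝ) - (k:ℝ)|)⁻¹ else 0) else 0) := tsum_congr hsplit
    _ ≤ ∑' k : ℤ, A ^ ((1:ℝ)/2) * (a k * b k) := by
        refine ENNReal.tsum_le_tsum (fun k => ?_)
        by_cases hk : Pk k
        · simp only [hk, if_true, ha, hb]
          calc G k * (∑' j : ℤ, if Pj j then
                R (j + k) * (ENNReal.ofReal |(j:ℝ) - (k:ℝ)|)⁻¹ else 0)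
              ≤ G k * (A ^ ((1:ℝ)/2) * (ENNReal.ofReal (2 * ((dk k : ℝ))⁻¹)) ^ ((1:ℝ)/2)) :=
                mul_le_mul_right (inner k hk) _
            _ = A ^ ((1:ℝ)/2) * (G k * (ENNReal.ofReal (2 * ((dk k : ℝ))⁻¹)) ^ ((1:ℝ)/2)) := by ring
        · simp [hk, ha, hb]
    _ = A ^ ((1:ℝ)/2) * ∑' k : ℤ, a k * b k := ENNReal.tsum_mul_left
    _ ≤ A ^ ((1:ℝ)/2) * ((∑' k : ℤ, a k ^ p) ^ (1/p) * (∑' k : ℤ, b k ^ q) ^ (1/q)) :=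
        mul_le_mul_right (holder_tsum hpq a b) _
    _ ≤ A ^ ((1:ℝ)/2) * (B ^ (1/p) * (ENNReal.ofReal (2^s * (2*Kr))) ^ (1/q)) := by
        gcongr
    _ = ENNReal.ofReal ((2^s * (2*Kr)) ^ (1/q)) * A ^ ((1:ℝ)/2) * B ^ (1/p) := by
        rw [ENNReal.ofReal_rpow_of_nonneg (by positivity) (by positivity)]
        ring


lemma onesided (d : ℤ) (hd : 2 ≤ d) (hde : Even d) (f : ℤ → ℝ≥0∞) (e : ℤ ≃ ℤ)
    (hle : ∀ m : ℤ, f (e m) ≠ 0 →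
      (Even m ∧ d ≤ m) ∧ f (e m) = ENNReal.ofReal ((((m:ℝ))^2)⁻¹)) :
    ∑' j : ℤ, f j ≤ ENNReal.ofReal ((d:ℝ))⁻¹ := by
  rw [← e.tsum_eq f]
  refine le_trans (ENNReal.tsum_le_tsum (fun m => ?_)) (tail_int d hd hde)
  by_cases h0 : f (e m) = 0
  · rw [h0]; exact zero_le
  · obtain ⟨hc, hv⟩ := hle m h0
    rw [hv, if_pos hc]

open Classical in
lemma htail1 (N : ℤ) (hN : 0 ≤ N) (hNe : Even N) (k : ℤ) (hke : Even k) (hkN : |k| ≤ N) :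
    (∑' j : ℤ, if Even j ∧ N < |j| then ENNReal.ofReal ((((j:ℝ) - (k:ℝ))^2)⁻¹) else 0)
      ≤ ENNReal.ofReal (2 * (((N + 2 - |k| : ℤ):ℝ))⁻¹) := by
  have habs : k ≤ |k| ∧ -k ≤ |k| := ⟨le_abs_self k, neg_le_abs k⟩
  set t : ℤ → ℝ≥0∞ := fun j => ENNReal.ofReal ((((j:ℝ) - (k:ℝ))^2)⁻¹) with ht
  set g1 : ℤ → ℝ≥0∞ := fun j => if Even j ∧ N < |j| ∧ 0 ≤ j then t j else 0 with hg1
  set g2 : ℤ → ℝ≥0∞ := fun j => if Even j ∧ N < |j| ∧ j < 0 then t j else 0 with hg2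
  have h1 : ∑' j : ℤ, g1 j ≤ ENNReal.ofReal (((N + 2 - k : ℤ):ℝ))⁻¹ := by
    refine onesided (N + 2 - k) (by omega)
      (by rcases hNe with ⟨a,ha⟩; rcases hke with ⟨b,hb⟩; exact ⟨a + 1 - b, by omega⟩)
      g1 (Equiv.addRight k) (fun m hm => ?_)
    rw [hg1] at hm ⊢
    simp only [Equiv.coe_addRight] at hm ⊢
    by_cases hc : Even (m + k) ∧ N < |m + k| ∧ 0 ≤ m + k
    · obtain ⟨hc1, hc2, hc3⟩ := hc
      have hev : Even m := by rcases hc1 with ⟨a, ha⟩; rcases hke with ⟨b, hb⟩; exact ⟨a - b, by omega⟩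
      have hge : N + 2 - k ≤ m := by
        have h4 := abs_of_nonneg hc3
        rcases hc1 with ⟨a, ha⟩; rcases hNe with ⟨c, hc'⟩; omega
      refine ⟨⟨hev, hge⟩, ?_⟩
      refine (if_pos ⟨hc1, hc2, hc3⟩).trans ?_; rw [ht]
      congr 1
      push_cast
      ring
    · exact absurd (if_neg hc) hm
  have h2 : ∑' j : ℤ, g2 j ≤ ENNReal.ofReal (((N + 2 + k : ℤ):ℝ))⁻¹ := by
    refine onesided (N + 2 + k) (by omega)
      (by rcases hNe with ⟨a,ha⟩; rcases hke with ⟨b,hb⟩; exact ⟨a + 1 + b, by omega⟩)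
      g2 (Equiv.subLeft k) (fun m hm => ?_)
    rw [hg2] at hm ⊢
    simp only [Equiv.subLeft_apply] at hm ⊢
    by_cases hc : Even (k - m) ∧ N < |k - m| ∧ k - m < 0
    · obtain ⟨hc1, hc2, hc3⟩ := hc
      have hev : Even m := by rcases hc1 with ⟨a, ha⟩; rcases hke with ⟨b, hb⟩; exact ⟨b - a, by omega⟩
      have hge : N + 2 + k ≤ m := by
        have h4 := abs_of_neg hc3
        rcases hc1 with ⟨a, ha⟩; rcases hNe with ⟨c, hc'⟩; omega
      refine ⟨⟨hev, hge⟩, ?_⟩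
      refine (if_pos ⟨hc1, hc2, hc3⟩).trans ?_; rw [ht]
      congr 1
      push_cast
      ring
    · exact absurd (if_neg hc) hm
  have hsplit : (∑' j : ℤ, if Even j ∧ N < |j| then t j else 0) ≤ ∑' j : ℤ, (g1 j + g2 j) := by
    refine ENNReal.tsum_le_tsum (fun j => ?_)
    rw [hg1, hg2]
    by_cases hc : Even j ∧ N < |j|
    · rcases le_or_gt 0 j with h | h
      · simp [hc.1, hc.2, h, not_lt.2 h]
      · simp [hc.1, hc.2, h, not_le.2 h]
    · simp only [if_neg hc]
      rw [if_neg (by tauto), if_neg (by tauto)]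
      simp
  refine le_trans hsplit ?_
  rw [ENNReal.tsum_add]
  refine le_trans (add_le_add h1 h2) ?_
  have hp2 : (0:ℝ) ≤ (((N + 2 - k : ℤ):ℝ))⁻¹ := by
    have : (0:ℝ) ≤ ((N + 2 - k : ℤ):ℝ) := by exact_mod_cast (by omega : (0:ℤ) ≤ N + 2 - k)
    positivity
  have hp3 : (0:ℝ) ≤ (((N + 2 + k : ℤ):ℝ))⁻¹ := by
    have : (0:ℝ) ≤ ((N + 2 + k : ℤ):ℝ) := by exact_mod_cast (by omega : (0:ℤ) ≤ N + 2 + k)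
    positivity
  rw [← ENNReal.ofReal_add hp2 hp3]
  apply ENNReal.ofReal_le_ofReal
  have hd1 : (0:ℝ) < ((N + 2 - |k| : ℤ):ℝ) := by exact_mod_cast (by omega : (0:ℤ) < N + 2 - |k|)
  have e1 : (((N + 2 - k : ℤ):ℝ))⁻¹ ≤ (((N + 2 - |k| : ℤ):ℝ))⁻¹ := by
    apply inv_anti₀ hd1; exact_mod_cast (by omega : (N + 2 - |k| : ℤ) ≤ N + 2 - k)
  have e2 : (((N + 2 + k : ℤ):ℝ))⁻¹ ≤ (((N + 2 - |k| : ℤ):ℝ))⁻¹ := by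
    apply inv_anti₀ hd1; exact_mod_cast (by omega : (N + 2 - |k| : ℤ) ≤ N + 2 + k)
  linarith

open Classical in
lemma htail2 (N : ℤ) (hN : 0 ≤ N) (hNe : Even N) (k : ℤ) (hke : Even k) (hkN : N < |k|) :
    (∑' j : ℤ, if Even j ∧ |j| ≤ N then ENNReal.ofReal ((((j:ℝ) - (k:ℝ))^2)⁻¹) else 0)
      ≤ ENNReal.ofReal (2 * (((|k| - N : ℤ):ℝ))⁻¹) := by
  have hd2 : (2:ℤ) ≤ |k| - N := by
    rcases hNe with ⟨a, ha⟩; rcases hke with ⟨b, hb⟩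
    rcases abs_cases k with ⟨h1, h2⟩ | ⟨h1, h2⟩ <;> omega
  have hde : Even (|k| - N) := by
    rcases hNe with ⟨a, ha⟩; rcases hke with ⟨b, hb⟩
    rcases abs_cases k with ⟨h1, h2⟩ | ⟨h1, h2⟩
    · exact ⟨b - a, by omega⟩
    · exact ⟨-b - a, by omega⟩
  have key : ∑' j : ℤ, (fun j => if Even j ∧ |j| ≤ N then
      ENNReal.ofReal ((((j:ℝ) - (k:ℝ))^2)⁻¹) else 0) j
      ≤ ENNReal.ofReal (((|k| - N : ℤ):ℝ))⁻¹ := by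
    rcases le_or_gt 0 k with hk0 | hk0
    · have hkk : |k| = k := abs_of_nonneg hk0
      refine onesided (|k| - N) hd2 hde _ (Equiv.subLeft k) (fun m hm => ?_)
      simp only [Equiv.subLeft_apply] at hm ⊢
      by_cases hc : Even (k - m) ∧ |k - m| ≤ N
      · obtain ⟨hc1, hc2⟩ := hc
        have h4 := abs_le.1 hc2
        have hev : Even m := by rcases hc1 with ⟨a, ha⟩; rcases hke with ⟨b, hb⟩; exact ⟨b - a, by omega⟩
        refine ⟨⟨hev, by omega⟩, ?_⟩
        rw [if_pos ⟨hc1, hc2⟩]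
        congr 1
        push_cast
        ring
      · rw [if_neg hc] at hm; exact absurd rfl hm
    · have hkk : |k| = -k := abs_of_neg hk0
      refine onesided (|k| - N) hd2 hde _ (Equiv.addRight k) (fun m hm => ?_)
      simp only [Equiv.coe_addRight] at hm ⊢
      by_cases hc : Even (m + k) ∧ |m + k| ≤ N
      · obtain ⟨hc1, hc2⟩ := hc
        have h4 := abs_le.1 hc2
        have hev : Even m := by rcases hc1 with ⟨a, ha⟩; rcases hke with ⟨b, hb⟩; exact ⟨a - b, by omega⟩
        refine ⟨⟨hev, by omega⟩, ?_⟩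
        refine (if_pos ⟨hc1, hc2⟩).trans ?_
        congr 1
        push_cast
        ring
      · exact absurd (if_neg hc) hm
  refine le_trans key (ENNReal.ofReal_le_ofReal ?_)
  have hd1 : (0:ℝ) < ((|k| - N : ℤ):ℝ) := by exact_mod_cast (by omega : (0:ℤ) < |k| - N)
  rw [two_mul]
  have : (0:ℝ) ≤ (((|k| - N : ℤ):ℝ))⁻¹ := by positivity
  linarith

noncomputable def Kr (s : ℝ) : ℝ := ∑' n : ℕ, (((2*(n:ℝ)+2)) ^ s)⁻¹

lemma Kr_nonneg (s : ℝ) : 0 ≤ Kr s := tsum_nonneg (fun n => by positivity)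

open Classical in
lemma hw_gen {s : ℝ} (hs : 1 < s) (P : ℤ → Prop) (D : ℤ → ℤ)
    (e1 e2 : ℕ → ℤ) (h1 : Function.Injective e1) (h2 : Function.Injective e2)
    (hsupp1 : ∀ m, P m → 0 ≤ m → ∃ n, e1 n = m)
    (hsupp2 : ∀ m, P m → m < 0 → ∃ n, e2 n = m)
    (hval1 : ∀ n, P (e1 n) → 0 ≤ e1 n → D (e1 n) = 2*(n:ℤ)+2)
    (hval2 : ∀ n, P (e2 n) → e2 n < 0 → D (e2 n) = 2*(n:ℤ)+2) :
    (∑' k : ℤ, if P k then ENNReal.ofReal ((((D k : ℤ):ℝ)) ^ s)⁻¹ else 0)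
      ≤ ENNReal.ofReal (2 * Kr s) := by
  have hgs := weight_summable hs
  have hgn : ∀ n : ℕ, (0:ℝ) ≤ (((2*(n:ℝ)+2)) ^ s)⁻¹ := fun n => by positivity
  set g1 : ℤ → ℝ≥0∞ := fun k => if P k ∧ 0 ≤ k then ENNReal.ofReal ((((D k : ℤ):ℝ)) ^ s)⁻¹ else 0 with hg1
  set g2 : ℤ → ℝ≥0∞ := fun k => if P k ∧ k < 0 then ENNReal.ofReal ((((D k : ℤ):ℝ)) ^ s)⁻¹ else 0 with hg2
  have key1 : ∑' k : ℤ, g1 k ≤ ENNReal.ofReal (Kr s) := by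
    refine inj_sum_le e1 h1 g1 (fun m hm => ?_) _ hgn hgs (fun n => ?_)
    · simp only [hg1] at hm
      by_cases hc : P m ∧ 0 ≤ m
      · exact hsupp1 m hc.1 hc.2
      · rw [if_neg hc] at hm; exact absurd rfl hm
    · simp only [hg1]
      by_cases hc : P (e1 n) ∧ 0 ≤ e1 n
      · rw [if_pos hc, hval1 n hc.1 hc.2]
        apply le_of_eq; congr 1; push_cast; ring
      · rw [if_neg hc]; exact zero_le
  have key2 : ∑' k : ℤ, g2 k ≤ ENNReal.ofReal (Kr s) := by
    refine inj_sum_le e2 h2 g2 (fun m hm => ?_) _ hgn hgs (fun n => ?_)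
    · simp only [hg2] at hm
      by_cases hc : P m ∧ m < 0
      · exact hsupp2 m hc.1 hc.2
      · rw [if_neg hc] at hm; exact absurd rfl hm
    · simp only [hg2]
      by_cases hc : P (e2 n) ∧ e2 n < 0
      · rw [if_pos hc, hval2 n hc.1 hc.2]
        apply le_of_eq; congr 1; push_cast; ring
      · rw [if_neg hc]; exact zero_le
  have hsplit : (∑' k : ℤ, if P k then ENNReal.ofReal ((((D k : ℤ):ℝ)) ^ s)⁻¹ else 0)
      ≤ ∑' k : ℤ, (g1 k + g2 k) := by
    refine ENNReal.tsum_le_tsum (fun k => ?_)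
    simp only [hg1, hg2]
    by_cases hc : P k
    · rcases le_or_gt 0 k with h | h
      · simp [hc, h, not_lt.2 h]
      · simp [hc, h, not_le.2 h]
    · simp [hc]
  refine le_trans hsplit ?_
  rw [ENNReal.tsum_add]
  refine le_trans (add_le_add key1 key2) ?_
  rw [← ENNReal.ofReal_add (Kr_nonneg s) (Kr_nonneg s)]
  apply ENNReal.ofReal_le_ofReal
  linarith

open Classical in
lemma hw1 {s : ℝ} (hs : 1 < s) (N : ℤ) (hN : 0 ≤ N) (hNe : Even N) :
    (∑' k : ℤ, if Even k ∧ |k| ≤ N then ENNReal.ofReal ((((N + 2 - |k| : ℤ):ℝ)) ^ s)⁻¹ else 0)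
      ≤ ENNReal.ofReal (2 * Kr s) := by
  refine le_trans (le_of_eq (tsum_congr (fun k => ?_)))
    (hw_gen hs (fun k => Even k ∧ |k| ≤ N) (fun k => N + 2 - |k|) (fun n => N - 2*(n:ℤ)) (fun n => -N + 2*(n:ℤ))
    (fun a b hab => by simpa using hab) (fun a b hab => by simpa using hab)
    (fun m hm h0 => ?_) (fun m hm h0 => ?_) (fun n hn h0 => ?_) (fun n hn h0 => ?_))
  · by_cases hc : Even k ∧ |k| ≤ N <;> simp [hc]
  · obtain ⟨⟨a, ha⟩, h2⟩ := hm
    have := abs_of_nonneg h0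
    rcases hNe with ⟨c, hc⟩
    exact ⟨(N - m).toNat / 2 , show N - 2*(((N - m).toNat / 2 : ℕ):ℤ) = m by omega⟩
  · obtain ⟨⟨a, ha⟩, h2⟩ := hm
    have := abs_of_neg h0
    rcases hNe with ⟨c, hc⟩
    exact ⟨(m + N).toNat / 2, show -N + 2*(((m + N).toNat / 2 : ℕ):ℤ) = m by omega⟩
  · show N + 2 - |N - 2*(n:ℤ)| = 2*(n:ℤ) + 2
    have h0' : (0:ℤ) ≤ N - 2*(n:ℤ) := h0
    have := abs_of_nonneg h0'; omega
  · show N + 2 - |-N + 2*(n:ℤ)| = 2*(n:ℤ) + 2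
    have h0' : -N + 2*(n:ℤ) < 0 := h0
    have := abs_of_neg h0'; omega

open Classical in
lemma hw2 {s : ℝ} (hs : 1 < s) (N : ℤ) (hN : 0 ≤ N) (hNe : Even N) :
    (∑' k : ℤ, if Even k ∧ N < |k| then ENNReal.ofReal ((((|k| - N : ℤ):ℝ)) ^ s)⁻¹ else 0)
      ≤ ENNReal.ofReal (2 * Kr s) := by
  refine le_trans (le_of_eq (tsum_congr (fun k => ?_)))
    (hw_gen hs (fun k => Even k ∧ N < |k|) (fun k => |k| - N) (fun n => N + 2 + 2*(n:ℤ)) (fun n => -N - 2 - 2*(n:ℤ))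
    (fun a b hab => by simpa using hab) (fun a b hab => by simpa using hab)
    (fun m hm h0 => ?_) (fun m hm h0 => ?_) (fun n hn h0 => ?_) (fun n hn h0 => ?_))
  · by_cases hc : Even k ∧ N < |k| <;> simp [hc]
  · obtain ⟨⟨a, ha⟩, h2⟩ := hm
    have := abs_of_nonneg h0
    rcases hNe with ⟨c, hc⟩
    exact ⟨(m - N - 2).toNat / 2 , show N + 2 + 2*(((m - N - 2).toNat / 2 : ℕ):ℤ) = m by omega⟩
  · obtain ⟨⟨a, ha⟩, h2⟩ := hm
    have := abs_of_neg h0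
    rcases hNe with ⟨c, hc⟩
    exact ⟨(-m - N - 2).toNat / 2, show -N - 2 - 2*(((-m - N - 2).toNat / 2 : ℕ):ℤ) = m by omega⟩
  · show |N + 2 + 2*(n:ℤ)| - N = 2*(n:ℤ) + 2
    have h0' : (0:ℤ) ≤ N + 2 + 2*(n:ℤ) := h0
    have := abs_of_nonneg h0'; omega
  · show |-N - 2 - 2*(n:ℤ)| - N = 2*(n:ℤ) + 2
    have h0' : -N - 2 - 2*(n:ℤ) < 0 := h0
    have := abs_of_neg h0'; omega

/-- For every `p ∈ (1,2)` there is `C(p) > 0` such that for all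
nonnegative sequences `r ∈ ℓ²(2ℤ)`, `g ∈ ℓᵖ(2ℤ)` and every even `N ≥ 0`,
`σ₁(N) ≤ C(p)‖r‖‖g‖_p` and `σ₂(N) ≤ C(p)‖r‖‖g‖_p`. -/
theorem stmt5 (p : ℝ) (hp1 : 1 < p) (hp2 : p < 2) :
    ∃ C > 0, ∀ r g : ℤ → ℝ, (∀ k, 0 ≤ r k) → (∀ k, 0 ≤ g k) →
      (Summable fun k : ℤ => if Even k then r k ^ 2 else 0) →
      (Summable fun k : ℤ => if Even k then g k ^ p else 0) →
      ∀ N : ℤ, 0 ≤ N → Even N →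
        sigma1 r g N ≤ C * evenL2Norm r * evenLpNorm g p ∧
        sigma2 r g N ≤ C * evenL2Norm r * evenLpNorm g p := by
  classical
  have hp0 : 0 < p := by linarith
  set q : ℝ := p / (p - 1) with hq
  have hpq : p.HolderConjugate q := Real.holderConjugate_iff.mpr ⟨hp1, by rw [hq, inv_div]; field_simp; ring⟩
  have hq2 : 2 < q := by
    rw [hq, lt_div_iff₀ (by linarith)]; linarith
  set s : ℝ := q / 2 with hs
  have hs1 : 1 < s := by rw [hs]; linarith
  have hq0 : 0 < q := by linarith
  have hKr := Kr_nonneg s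
  set C : ℝ := (2^s * (2 * Kr s)) ^ (1/q) + 1 with hC
  have hCb : 0 ≤ (2^s * (2 * Kr s)) ^ (1/q) := Real.rpow_nonneg (by positivity) _
  have hC0 : 0 < C := by rw [hC]; linarith
  refine ⟨C, hC0, ?_⟩
  intro r g hr hg hrs hgs N hN hNe
  set R : ℤ → ℝ≥0∞ := fun k => ENNReal.ofReal (r k) with hR
  set G : ℤ → ℝ≥0∞ := fun k => ENNReal.ofReal (g k) with hG
  set T2 : ℝ := ∑' k : ℤ, (if Even k then r k ^ 2 else 0) with hT2
  set Tp : ℝ := ∑' k : ℤ, (if Even k then g k ^ p else 0) with hTp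
  have hT2nn : 0 ≤ T2 := tsum_nonneg (fun k => by by_cases hk : Even k <;> simp [hk] <;> positivity)
  have hTpnn : 0 ≤ Tp := tsum_nonneg (fun k => by
    by_cases hk : Even k <;> simp [hk]
    exact Real.rpow_nonneg (hg k) p)
  have hA : (∑' k : ℤ, if Even k then R k ^ (2:ℝ) else 0) = ENNReal.ofReal T2 := by
    rw [hT2, ENNReal.ofReal_tsum_of_nonneg (fun k => by by_cases hk : Even k <;> simp [hk] <;> positivity) hrs]
    refine tsum_congr fun k => ?_
    by_cases hk : Even k
    · simp only [hk, if_true, hR]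
      rw [ENNReal.ofReal_rpow_of_nonneg (hr k) (by norm_num)]
      rw [show ((2:ℝ)) = ((2:ℕ):ℝ) by norm_num, Real.rpow_natCast]
    · simp [hk]
  have hB : (∑' k : ℤ, if Even k then G k ^ p else 0) = ENNReal.ofReal Tp := by
    rw [hTp, ENNReal.ofReal_tsum_of_nonneg (fun k => by
        by_cases hk : Even k <;> simp [hk]
        exact Real.rpow_nonneg (hg k) p) hgs]
    refine tsum_congr fun k => ?_
    by_cases hk : Even k
    · simp only [hk, if_true, hG]
      rw [ENNReal.ofReal_rpow_of_nonneg (hg k) hp0.le]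
    · simp [hk]
  have hnorm2 : ENNReal.ofReal (evenL2Norm r)
      = (∑' k : ℤ, if Even k then R k ^ (2:ℝ) else 0) ^ ((1:ℝ)/2) := by
    rw [hA, evenL2Norm, ← hT2, Real.sqrt_eq_rpow,
      ENNReal.ofReal_rpow_of_nonneg hT2nn (by norm_num)]
  have hnormp : ENNReal.ofReal (evenLpNorm g p)
      = (∑' k : ℤ, if Even k then G k ^ p else 0) ^ (1/p) := by
    rw [hB, evenLpNorm, ← hTp, ENNReal.ofReal_rpow_of_nonneg hTpnn (by positivity)]
  have hL2nn : 0 ≤ evenL2Norm r := Real.sqrt_nonneg _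
  have hLpnn : 0 ≤ evenLpNorm g p := Real.rpow_nonneg hTpnn _
  have hrhs : 0 ≤ C * evenL2Norm r * evenLpNorm g p :=
    mul_nonneg (mul_nonneg hC0.le hL2nn) hLpnn
  have hconst : ENNReal.ofReal ((2^s * (2 * Kr s)) ^ (1/q)) ≤ ENNReal.ofReal C := by
    apply ENNReal.ofReal_le_ofReal; rw [hC]; linarith
  have hrhs' : ENNReal.ofReal ((2^s * (2 * Kr s)) ^ (1/q))
        * (∑' k : ℤ, if Even k then R k ^ (2:ℝ) else 0) ^ ((1:ℝ)/2)
        * (∑' k : ℤ, if Even k then G k ^ p else 0) ^ (1/p)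
      ≤ ENNReal.ofReal (C * evenL2Norm r * evenLpNorm g p) := by
    rw [ENNReal.ofReal_mul (mul_nonneg hC0.le hL2nn), ENNReal.ofReal_mul hC0.le,
      hnorm2, hnormp]
    calc ENNReal.ofReal ((2^s * (2 * Kr s)) ^ (1/q))
          * (∑' k : ℤ, if Even k then R k ^ (2:ℝ) else 0) ^ ((1:ℝ)/2)
          * (∑' k : ℤ, if Even k then G k ^ p else 0) ^ (1/p)
        ≤ ENNReal.ofReal C
          * (∑' k : ℤ, if Even k then R k ^ (2:ℝ) else 0) ^ ((1:ℝ)/2)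
          * (∑' k : ℤ, if Even k then G k ^ p else 0) ^ (1/p) := by
          gcongr
      _ = _ := by ring
  constructor
  · -- sigma1
    refine real_le (fun z => ?_) hrhs ?_
    · by_cases hc : Even z.1 ∧ Even z.2 ∧ |z.1| ≤ N ∧ N < |z.2|
      · rw [if_pos hc]
        have h0 : (0:ℝ) ≤ ((|z.2 - z.1| : ℤ):ℝ) := by positivity
        exact div_nonneg (mul_nonneg (hr _) (hg _)) h0
      · rw [if_neg hc]
    · have key := core_s5 p q s hpq hs (Kr s) hKr R G
        (fun k => Even k ∧ |k| ≤ N) (fun j => Even j ∧ N < |j|) (fun k => N + 2 - |k|)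
        (fun k hk => by obtain ⟨h1, h2⟩ := hk; show (0:ℤ) < N + 2 - |k|; omega)
        (fun k hk => hk.1)
        (fun k j hk hj => by rcases hk.1 with ⟨a,ha⟩; rcases hj.1 with ⟨b,hb⟩; exact ⟨b+a, by omega⟩)
        (fun k j hk hj => by intro hjk; rw [hjk] at hj; have := hk.2; have := hj.2; omega)
        (fun k hk => le_trans (le_of_eq (tsum_congr fun j => by
            by_cases hc : Even j ∧ N < |j| <;> simp [hc])) (htail1 N hN hNe k hk.1 hk.2))
        (le_trans (le_of_eq (tsum_congr fun k => by
            by_cases hc : Even k ∧ |k| ≤ N <;> simp [hc])) (hw1 hs1 N hN hNe))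
      refine le_trans (le_of_eq (tsum_congr fun z => ?_)) (le_trans key hrhs')
      by_cases hc : Even z.1 ∧ Even z.2 ∧ |z.1| ≤ N ∧ N < |z.2|
      · obtain ⟨h1, h2, h3, h4⟩ := id hc
        rw [if_pos hc, if_pos (show (Even z.1 ∧ |z.1| ≤ N) ∧ (Even z.2 ∧ N < |z.2|) from ⟨⟨h1,h3⟩,⟨h2,h4⟩⟩)]
        have hz : ((|z.2 - z.1| : ℤ):ℝ) = |(z.2:ℝ) - (z.1:ℝ)| := by push_cast; ring
        have hpos : (0:ℝ) < |(z.2:ℝ) - (z.1:ℝ)| := by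
          rw [← hz]
          have : z.2 ≠ z.1 := by intro h'; rw [h'] at h4; omega
          have : (0:ℤ) < |z.2 - z.1| := abs_pos.2 (sub_ne_zero.2 this)
          exact_mod_cast this
        rw [div_eq_mul_inv, hz, ENNReal.ofReal_mul (mul_nonneg (hr _) (hg _)),
          ENNReal.ofReal_mul (hr _), ENNReal.ofReal_inv_of_pos hpos]
      · rw [if_neg hc, if_neg (show ¬((Even z.1 ∧ |z.1| ≤ N) ∧ (Even z.2 ∧ N < |z.2|)) by tauto),
          ENNReal.ofReal_zero]
    -- end sigma1
  · -- sigma2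
    refine real_le (fun z => ?_) hrhs ?_
    · by_cases hc : Even z.1 ∧ Even z.2 ∧ N < |z.1| ∧ |z.2| ≤ N
      · rw [if_pos hc]
        have h0 : (0:ℝ) ≤ ((|z.1 - z.2| : ℤ):ℝ) := by positivity
        exact div_nonneg (mul_nonneg (hr _) (hg _)) h0
      · rw [if_neg hc]
    · have key := core_s5 p q s hpq hs (Kr s) hKr R G
        (fun k => Even k ∧ N < |k|) (fun j => Even j ∧ |j| ≤ N) (fun k => |k| - N)
        (fun k hk => by obtain ⟨h1, h2⟩ := hk; show (0:ℤ) < |k| - N; omega)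
        (fun k hk => hk.1)
        (fun k j hk hj => by rcases hk.1 with ⟨a,ha⟩; rcases hj.1 with ⟨b,hb⟩; exact ⟨b+a, by omega⟩)
        (fun k j hk hj => by intro hjk; rw [hjk] at hj; have := hk.2; have := hj.2; omega)
        (fun k hk => le_trans (le_of_eq (tsum_congr fun j => by
            by_cases hc : Even j ∧ |j| ≤ N <;> simp [hc])) (htail2 N hN hNe k hk.1 hk.2))
        (le_trans (le_of_eq (tsum_congr fun k => by
            by_cases hc : Even k ∧ N < |k| <;> simp [hc])) (hw2 hs1 N hN hNe))
      refine le_trans (le_of_eq (tsum_congr fun z => ?_)) (le_trans key hrhs')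
      by_cases hc : Even z.1 ∧ Even z.2 ∧ N < |z.1| ∧ |z.2| ≤ N
      · obtain ⟨h1, h2, h3, h4⟩ := id hc
        rw [if_pos hc, if_pos (show (Even z.1 ∧ N < |z.1|) ∧ (Even z.2 ∧ |z.2| ≤ N) from ⟨⟨h1,h3⟩,⟨h2,h4⟩⟩)]
        have hz : ((|z.1 - z.2| : ℤ):ℝ) = |(z.2:ℝ) - (z.1:ℝ)| := by
          push_cast
          rw [abs_sub_comm]
        have hpos : (0:ℝ) < |(z.2:ℝ) - (z.1:ℝ)| := by
          rw [← hz]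
          have : z.1 ≠ z.2 := by intro h'; rw [h'] at h3; omega
          have : (0:ℤ) < |z.1 - z.2| := abs_pos.2 (sub_ne_zero.2 this)
          exact_mod_cast this
        rw [div_eq_mul_inv, hz, ENNReal.ofReal_mul (mul_nonneg (hr _) (hg _)),
          ENNReal.ofReal_mul (hr _), ENNReal.ofReal_inv_of_pos hpos]
      · rw [if_neg hc, if_neg (show ¬((Even z.1 ∧ N < |z.1|) ∧ (Even z.2 ∧ |z.2| ≤ N)) by tauto),
          ENNReal.ofReal_zero]
end

section
/- For every p ∈ (1,2) there is a constant C(p) > 0 such that: if r, g : 2ℤ → [0,∞) satisfy Σ_{k∈2ℤ} r(k)^p < ∞ and Σ_{k∈2ℤ} g(k)² < ∞, then for every even N ∈ 2ℕ one has σ₁(N) ≤ C(p)·‖r‖_p·‖g‖ and σ₂(N) ≤ C(p)·‖r‖_p·‖g‖. -/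
open scoped BigOperators ENNReal

namespace Stmt6Aux

lemma key_ineq {s a b : ℝ} (hs : 1 < s) (ha : 0 < a) (hab : a ≤ b) :
    (s - 1) * (b - a) * b ^ (-s) ≤ a ^ (1 - s) - b ^ (1 - s) := by
  have hb : 0 < b := lt_of_lt_of_le ha hab
  have ht0 : 0 < a / b := div_pos ha hb
  have ht1 : a / b ≤ 1 := (div_le_one hb).2 hab
  have hlog : Real.log (a / b) ≤ a / b - 1 := Real.log_le_sub_one_of_pos ht0
  have hexp : ((1 - s) * Real.log (a / b)) + 1 ≤ Real.exp ((1 - s) * Real.log (a / b)) :=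
    Real.add_one_le_exp _
  have hrpow : (a / b) ^ (1 - s) = Real.exp ((1 - s) * Real.log (a / b)) := by
    rw [Real.rpow_def_of_pos ht0, mul_comm]
  have h1 : 1 + (s - 1) * (1 - a / b) ≤ (a / b) ^ (1 - s) := by
    rw [hrpow]; nlinarith
  have ha' : a ^ (1 - s) = (a / b) ^ (1 - s) * b ^ (1 - s) := by
    rw [← Real.mul_rpow ht0.le hb.le, div_mul_cancel₀ _ hb.ne']
  have hbb : b ^ (1 - s) = b * b ^ (-s) := by
    rw [show (1 : ℝ) - s = 1 + (-s) by ring, Real.rpow_add hb, Real.rpow_one]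
  have hb1s : 0 ≤ b ^ (1 - s) := Real.rpow_nonneg hb.le _
  have hba : b - a = b * (1 - a / b) := by field_simp
  calc (s - 1) * (b - a) * b ^ (-s)
      = (s - 1) * (1 - a / b) * b ^ (1 - s) := by rw [hba, hbb]; ring
    _ ≤ ((a / b) ^ (1 - s) - 1) * b ^ (1 - s) :=
        mul_le_mul_of_nonneg_right (by linarith) hb1s
    _ = a ^ (1 - s) - b ^ (1 - s) := by rw [ha', hbb]; ring

lemma tail_fin {s m : ℝ} (hs : 1 < s) (hm : 0 ≤ m) (M : ℕ) :
    ∑ n ∈ Finset.range M, (m + 2 * (n : ℝ) + 2) ^ (-s)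
      ≤ (1 + 1 / (2 * (s - 1))) * (m + 2) ^ (1 - s) := by
  have hs1 : 0 < s - 1 := by linarith
  have key : ∀ K : ℕ, ∑ n ∈ Finset.range K, (m + 2 * ((n : ℝ) + 1) + 2) ^ (-s)
      ≤ 1 / (2 * (s - 1)) * ((m + 2) ^ (1 - s) - (m + 2 * (K : ℝ) + 2) ^ (1 - s)) := by
    intro K
    induction K with
    | zero => simp
    | succ K ih =>
      rw [Finset.sum_range_succ]
      have hk := key_ineq hs (a := m + 2 * (K : ℝ) + 2) (b := m + 2 * (K : ℝ) + 4)
        (by positivity) (by linarith)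
      have e1 : m + 2 * ((K : ℝ) + 1) + 2 = m + 2 * (K : ℝ) + 4 := by ring
      have e2 : m + 2 * ((K + 1 : ℕ) : ℝ) + 2 = m + 2 * (K : ℝ) + 4 := by push_cast; ring
      rw [e1, e2]
      have h2 : (m + 2 * (K : ℝ) + 4) ^ (-s)
          ≤ 1 / (2 * (s - 1)) * ((m + 2 * (K : ℝ) + 2) ^ (1 - s)
            - (m + 2 * (K : ℝ) + 4) ^ (1 - s)) := by
        rw [div_mul_eq_mul_div, le_div_iff₀ (by linarith)]
        nlinarith
      linarith
  rcases M with _ | K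
  · simp; positivity
  · rw [Finset.sum_range_succ']
    have h0 : (m + 2 * ((0 : ℕ) : ℝ) + 2) ^ (-s) ≤ (m + 2) ^ (1 - s) := by
      norm_num
      exact Real.rpow_le_rpow_of_exponent_le (by linarith) (by linarith)
    have hK := key K
    have hcast : ∀ n : ℕ, (m + 2 * ((n + 1 : ℕ) : ℝ) + 2) ^ (-s)
        = (m + 2 * ((n : ℝ) + 1) + 2) ^ (-s) := by intro n; push_cast; ring_nf
    rw [Finset.sum_congr rfl fun n _ => hcast n]
    have hnn : 0 ≤ (m + 2 * (K : ℝ) + 2) ^ (1 - s) := Real.rpow_nonneg (by positivity) _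
    have hq : 0 < 2 * (s - 1) := by linarith
    have : 1 / (2 * (s - 1)) * ((m + 2) ^ (1 - s) - (m + 2 * (K : ℝ) + 2) ^ (1 - s))
        ≤ 1 / (2 * (s - 1)) * (m + 2) ^ (1 - s) := by
      apply mul_le_mul_of_nonneg_left _ (by positivity)
      linarith
    calc (∑ n ∈ Finset.range K, (m + 2 * ((n : ℝ) + 1) + 2) ^ (-s)) + (m + 2 * ((0:ℕ) : ℝ) + 2) ^ (-s)
        ≤ 1 / (2 * (s - 1)) * (m + 2) ^ (1 - s) + (m + 2) ^ (1 - s) := by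
          exact add_le_add (le_trans hK this) h0
      _ = (1 + 1 / (2 * (s - 1))) * (m + 2) ^ (1 - s) := by ring

lemma tail_sum {s m : ℝ} (hs : 1 < s) (hm : 0 ≤ m) :
    ∑' n : ℕ, ENNReal.ofReal ((m + 2 * (n : ℝ) + 2) ^ (-s))
      ≤ ENNReal.ofReal ((1 + 1 / (2 * (s - 1))) * (m + 2) ^ (1 - s)) := by
  rw [ENNReal.tsum_eq_iSup_sum]
  refine iSup_le fun F => ?_
  classical
  have hFsub : F ⊆ Finset.range (F.sup id + 1) := fun i hi =>
    Finset.mem_range.2 (Nat.lt_succ_of_le (Finset.le_sup (f := id) hi))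
  calc ∑ n ∈ F, ENNReal.ofReal ((m + 2 * (n : ℝ) + 2) ^ (-s))
      ≤ ∑ n ∈ Finset.range (F.sup id + 1), ENNReal.ofReal ((m + 2 * (n : ℝ) + 2) ^ (-s)) :=
        Finset.sum_le_sum_of_subset hFsub
    _ = ENNReal.ofReal (∑ n ∈ Finset.range (F.sup id + 1), (m + 2 * (n : ℝ) + 2) ^ (-s)) :=
        (ENNReal.ofReal_sum_of_nonneg fun i _ => Real.rpow_nonneg (by positivity) _).symm
    _ ≤ _ := ENNReal.ofReal_le_ofReal (tail_fin hs hm _)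

lemma holder_tsum {p q : ℝ} (hpq : Real.HolderConjugate p q) (f g : ℤ → ℝ≥0∞) :
    ∑' i : ℤ, f i * g i ≤ (∑' i : ℤ, f i ^ p) ^ (1 / p) * (∑' i : ℤ, g i ^ q) ^ (1 / q) := by
  have h := ENNReal.lintegral_mul_le_Lp_mul_Lq (MeasureTheory.Measure.count : MeasureTheory.Measure ℤ)
    hpq (measurable_of_countable f).aemeasurable (measurable_of_countable g).aemeasurable
  simpa [MeasureTheory.lintegral_count] using h

lemma tsum_le_of_inj {f : ℤ → ℝ≥0∞} {i : ℕ → ℤ} (hi : Function.Injective i)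
    (hsupp : ∀ k, f k ≠ 0 → k ∈ Set.range i) (g : ℕ → ℝ≥0∞) (hbound : ∀ n, f (i n) ≤ g n) :
    ∑' k : ℤ, f k ≤ ∑' n : ℕ, g n := by
  rw [← hi.tsum_eq fun k hk => hsupp k hk]
  exact ENNReal.tsum_le_tsum hbound

lemma conj22 : Real.HolderConjugate 2 2 := Real.HolderConjugate.two_two

lemma core {p q : ℝ} (hpq : Real.HolderConjugate p q) (R G : ℤ → ℝ≥0∞)
    (P Q : ℤ → Prop) [DecidablePred P] [DecidablePred Q]
    (hQ : ∀ k j : ℤ, P k → Q j → k ≠ j)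
    (A : ℤ → ℝ≥0∞) (S : ℝ≥0∞)
    (hA : ∀ k : ℤ, Even k → P k →
      (∑' j : ℤ, if Even j ∧ Q j then ENNReal.ofReal (((|j - k| : ℤ) : ℝ) ^ (-q)) else 0) ^ (1 / q)
        ≤ A k)
    (hS : (∑' k : ℤ, if Even k ∧ P k then A k ^ (2 : ℝ) else 0) ≤ S) :
    (∑' kj : ℤ × ℤ, if Even kj.1 ∧ Even kj.2 ∧ P kj.1 ∧ Q kj.2
        then R (kj.2 + kj.1) * G kj.1 / ENNReal.ofReal ((|kj.2 - kj.1| : ℤ) : ℝ) else 0)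
      ≤ (∑' m : ℤ, if Even m then R m ^ p else 0) ^ (1 / p)
        * ((∑' k : ℤ, if Even k then G k ^ (2 : ℝ) else 0) ^ (1 / (2 : ℝ)) * S ^ (1 / (2 : ℝ))) := by
  classical
  set Λp := (∑' m : ℤ, if Even m then R m ^ p else 0) ^ (1 / p) with hΛp
  set u : ℤ → ℝ≥0∞ := fun k => if Even k ∧ P k then G k else 0 with hu
  set v : ℤ → ℝ≥0∞ := fun k => if Even k ∧ P k then A k else 0 with hv
  have claim1 : ∀ k : ℤ, (∑' j : ℤ, if Even k ∧ Even j ∧ P k ∧ Q j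
      then R (j + k) * G k / ENNReal.ofReal ((|j - k| : ℤ) : ℝ) else 0) ≤ Λp * (u k * v k) := by
    intro k
    by_cases hk : Even k ∧ P k
    · obtain ⟨hke, hkP⟩ := hk
      set f : ℤ → ℝ≥0∞ := fun j => if Even j ∧ Q j then R (j + k) else 0 with hf
      set h : ℤ → ℝ≥0∞ := fun j =>
        if Even j ∧ Q j then (ENNReal.ofReal ((|j - k| : ℤ) : ℝ))⁻¹ else 0 with hh
      have hptw : ∀ j : ℤ, (if Even k ∧ Even j ∧ P k ∧ Q j
          then R (j + k) * G k / ENNReal.ofReal ((|j - k| : ℤ) : ℝ) else 0)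
          = G k * (f j * h j) := by
        intro j
        by_cases hj : Even j ∧ Q j
        · rw [if_pos ⟨hke, hj.1, hkP, hj.2⟩]
          simp only [hf, hh, if_pos hj]
          rw [div_eq_mul_inv]; ring
        · rw [if_neg (by tauto)]
          simp only [hf, hh, if_neg hj, mul_zero, zero_mul]
      rw [tsum_congr hptw, ENNReal.tsum_mul_left]
      have hH := holder_tsum hpq f h
      have hfp : (∑' j : ℤ, f j ^ p) ≤ ∑' m : ℤ, if Even m then R m ^ p else 0 := by
        have h1 : ∀ j : ℤ, f j ^ p ≤ (if Even (j + k) then R (j + k) ^ p else 0) := by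
          intro j
          by_cases hj : Even j ∧ Q j
          · simp only [hf, if_pos hj]
            rw [if_pos (Int.even_add.2 (by simp [hj.1, hke]))]
          · simp only [hf, if_neg hj]
            rw [ENNReal.zero_rpow_of_pos hpq.pos]; exact zero_le
        calc (∑' j : ℤ, f j ^ p) ≤ ∑' j : ℤ, (if Even (j + k) then R (j + k) ^ p else 0) :=
              ENNReal.tsum_le_tsum h1
          _ = ∑' m : ℤ, if Even m then R m ^ p else 0 :=
              (Equiv.addRight k).tsum_eq (fun m => if Even m then R m ^ p else 0)
      have hhq : (∑' j : ℤ, h j ^ q)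
          = ∑' j : ℤ, if Even j ∧ Q j then ENNReal.ofReal (((|j - k| : ℤ) : ℝ) ^ (-q)) else 0 := by
        refine tsum_congr fun j => ?_
        by_cases hj : Even j ∧ Q j
        · simp only [hh, if_pos hj]
          have hne : j - k ≠ 0 := sub_ne_zero.2 fun e => (hQ k j hkP hj.2) e.symm
          have hpos : (0 : ℝ) < ((|j - k| : ℤ) : ℝ) := by exact_mod_cast abs_pos.2 hne
          rw [← ENNReal.ofReal_rpow_of_pos hpos, ENNReal.inv_rpow, ← ENNReal.rpow_neg]
        · simp only [hh, if_neg hj]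
          rw [ENNReal.zero_rpow_of_pos hpq.symm.pos]
      have hfin : (∑' j : ℤ, f j * h j) ≤ Λp * A k := by
        refine le_trans hH (mul_le_mul' (ENNReal.rpow_le_rpow hfp (one_div_nonneg.2 hpq.nonneg)) ?_)
        rw [hhq]; exact hA k hke hkP
      calc G k * (∑' j : ℤ, f j * h j) ≤ G k * (Λp * A k) := mul_le_mul_right hfin _
        _ = Λp * (u k * v k) := by
            simp only [hu, hv, if_pos (⟨hke, hkP⟩ : Even k ∧ P k)]; ring
    · have hz : ∀ j : ℤ, (if Even k ∧ Even j ∧ P k ∧ Q j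
          then R (j + k) * G k / ENNReal.ofReal ((|j - k| : ℤ) : ℝ) else 0) = 0 :=
        fun j => if_neg (by tauto)
      rw [tsum_congr hz]; simp
  calc (∑' kj : ℤ × ℤ, if Even kj.1 ∧ Even kj.2 ∧ P kj.1 ∧ Q kj.2
        then R (kj.2 + kj.1) * G kj.1 / ENNReal.ofReal ((|kj.2 - kj.1| : ℤ) : ℝ) else 0)
      = ∑' k : ℤ, ∑' j : ℤ, (if Even k ∧ Even j ∧ P k ∧ Q j
        then R (j + k) * G k / ENNReal.ofReal ((|j - k| : ℤ) : ℝ) else 0) := ENNReal.tsum_prod'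
    _ ≤ ∑' k : ℤ, Λp * (u k * v k) := ENNReal.tsum_le_tsum claim1
    _ = Λp * ∑' k : ℤ, u k * v k := ENNReal.tsum_mul_left
    _ ≤ Λp * ((∑' k : ℤ, u k ^ (2 : ℝ)) ^ (1 / (2 : ℝ)) * (∑' k : ℤ, v k ^ (2 : ℝ)) ^ (1 / (2 : ℝ))) :=
        mul_le_mul_right (holder_tsum conj22 u v) _
    _ ≤ _ := by
        refine mul_le_mul_right (mul_le_mul' ?_ ?_) _
        · refine ENNReal.rpow_le_rpow (ENNReal.tsum_le_tsum fun k => ?_) (by norm_num)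
          by_cases hk : Even k ∧ P k
          · simp only [hu, if_pos hk, if_pos hk.1]; exact le_rfl
          · simp only [hu, if_neg hk]
            rw [ENNReal.zero_rpow_of_pos (by norm_num)]; exact zero_le
        · refine ENNReal.rpow_le_rpow (le_trans (le_of_eq (tsum_congr fun k => ?_)) hS) (by norm_num)
          by_cases hk : Even k ∧ P k
          · simp only [hv, if_pos hk]
          · simp only [hv, if_neg hk]; rw [ENNReal.zero_rpow_of_pos (by norm_num)]

lemma tail1 {q : ℝ} (hq : 1 < q) {N k : ℤ} (hN : 0 ≤ N) (hNe : Even N)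
    (hke : Even k) (hk : |k| ≤ N) :
    (∑' j : ℤ, if Even j ∧ N < |j| then ENNReal.ofReal (((|j - k| : ℤ) : ℝ) ^ (-q)) else 0)
      ≤ ENNReal.ofReal ((1 + 1 / (2 * (q - 1))) * ((N : ℝ) - (k : ℝ) + 2) ^ (1 - q))
        + ENNReal.ofReal ((1 + 1 / (2 * (q - 1))) * ((N : ℝ) + (k : ℝ) + 2) ^ (1 - q)) := by
  classical
  obtain ⟨hk1, hk2⟩ := abs_le.1 hk
  have hsplit : ∀ j : ℤ, (if Even j ∧ N < |j| then ENNReal.ofReal (((|j - k| : ℤ) : ℝ) ^ (-q)) else 0)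
      = (if Even j ∧ N < j then ENNReal.ofReal (((|j - k| : ℤ) : ℝ) ^ (-q)) else 0)
        + (if Even j ∧ j < -N then ENNReal.ofReal (((|j - k| : ℤ) : ℝ) ^ (-q)) else 0) := by
    intro j
    by_cases hje : Even j
    · by_cases h1 : N < j
      · have hna : N < |j| := lt_of_lt_of_le h1 (le_abs_self j)
        have h2 : ¬ j < -N := by linarith
        rw [if_pos ⟨hje, hna⟩, if_pos ⟨hje, h1⟩, if_neg (fun hc => h2 hc.2), add_zero]
      · by_cases h2 : j < -N
        · have hna : N < |j| := by rw [abs_of_nonpos (by linarith)]; linarith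
          rw [if_pos ⟨hje, hna⟩, if_neg (fun hc => h1 hc.2), if_pos ⟨hje, h2⟩, zero_add]
        · have hna : ¬ N < |j| := by
            rcases abs_cases j with ⟨he, _⟩ | ⟨he, _⟩ <;> rw [he] <;> omega
          rw [if_neg (fun hc => hna hc.2), if_neg (fun hc => h1 hc.2),
            if_neg (fun hc => h2 hc.2), add_zero]
    · simp [hje]
  rw [tsum_congr hsplit, ENNReal.tsum_add]
  have hpart1 : (∑' j : ℤ, if Even j ∧ N < j then ENNReal.ofReal (((|j - k| : ℤ) : ℝ) ^ (-q)) else 0)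
      ≤ ENNReal.ofReal ((1 + 1 / (2 * (q - 1))) * ((N : ℝ) - (k : ℝ) + 2) ^ (1 - q)) := by
    have htail := tail_sum (s := q) (m := (N : ℝ) - (k : ℝ)) hq (by exact_mod_cast (by linarith : (0:ℤ) ≤ N - k))
    refine le_trans (tsum_le_of_inj (i := fun n : ℕ => N + 2 * (n : ℤ) + 2)
      (fun a b hab => by dsimp only at hab; omega) ?_
      (fun n => ENNReal.ofReal (((N : ℝ) - (k : ℝ) + 2 * (n : ℝ) + 2) ^ (-q))) ?_) htail
    · intro j hj
      have hc : Even j ∧ N < j := by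
        by_contra hc; rw [if_neg hc] at hj; exact hj rfl
      obtain ⟨t, ht⟩ := hc.1.sub hNe
      have ht1 : 1 ≤ t := by omega
      refine ⟨(t - 1).toNat, ?_⟩
      have : ((t - 1).toNat : ℤ) = t - 1 := Int.toNat_of_nonneg (by omega)
      dsimp only; omega
    · intro n
      have hcond : Even (N + 2 * (n : ℤ) + 2) ∧ N < N + 2 * (n : ℤ) + 2 := by
        obtain ⟨t, ht⟩ := hNe
        exact ⟨⟨t + n + 1, by omega⟩, by omega⟩
      rw [if_pos hcond]
      apply le_of_eq
      have habs : ((|N + 2 * (n : ℤ) + 2 - k| : ℤ) : ℝ) = (N : ℝ) - (k : ℝ) + 2 * (n : ℝ) + 2 := by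
        rw [abs_of_nonneg (by omega)]; push_cast; ring
      rw [habs]
  have hpart2 : (∑' j : ℤ, if Even j ∧ j < -N then ENNReal.ofReal (((|j - k| : ℤ) : ℝ) ^ (-q)) else 0)
      ≤ ENNReal.ofReal ((1 + 1 / (2 * (q - 1))) * ((N : ℝ) + (k : ℝ) + 2) ^ (1 - q)) := by
    have htail := tail_sum (s := q) (m := (N : ℝ) + (k : ℝ)) hq (by exact_mod_cast (by linarith : (0:ℤ) ≤ N + k))
    refine le_trans (tsum_le_of_inj (i := fun n : ℕ => -N - 2 * (n : ℤ) - 2)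
      (fun a b hab => by dsimp only at hab; omega) ?_
      (fun n => ENNReal.ofReal (((N : ℝ) + (k : ℝ) + 2 * (n : ℝ) + 2) ^ (-q))) ?_) htail
    · intro j hj
      have hc : Even j ∧ j < -N := by
        by_contra hc; rw [if_neg hc] at hj; exact hj rfl
      obtain ⟨t, ht⟩ := hc.1.add hNe
      have ht1 : t ≤ -1 := by omega
      refine ⟨(-t - 1).toNat, ?_⟩
      have : ((-t - 1).toNat : ℤ) = -t - 1 := Int.toNat_of_nonneg (by omega)
      dsimp only; omega
    · intro n
      have hcond : Even (-N - 2 * (n : ℤ) - 2) ∧ -N - 2 * (n : ℤ) - 2 < -N := by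
        obtain ⟨t, ht⟩ := hNe
        exact ⟨⟨-t - n - 1, by omega⟩, by omega⟩
      rw [if_pos hcond]
      apply le_of_eq
      have habs : ((|(-N - 2 * (n : ℤ) - 2) - k| : ℤ) : ℝ)
          = (N : ℝ) + (k : ℝ) + 2 * (n : ℝ) + 2 := by
        rw [abs_of_nonpos (by omega), ]; push_cast; ring
      rw [habs]
  exact add_le_add hpart1 hpart2

lemma tail2 {q : ℝ} (hq : 1 < q) {N k : ℤ} (hN : 0 ≤ N) (hNe : Even N)
    (hke : Even k) (hk : N < |k|) :
    (∑' j : ℤ, if Even j ∧ |j| ≤ N then ENNReal.ofReal (((|j - k| : ℤ) : ℝ) ^ (-q)) else 0)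
      ≤ ENNReal.ofReal ((1 + 1 / (2 * (q - 1))) * (((|k| : ℤ) : ℝ) - (N : ℝ)) ^ (1 - q)) := by
  classical
  rcases lt_abs.1 hk with h1 | h1
  · -- k > N
    have habsk : ((|k| : ℤ) : ℝ) = (k : ℝ) := by rw [abs_of_nonneg (by omega)]
    have hbase : ((|k| : ℤ) : ℝ) - (N : ℝ) = ((k : ℝ) - (N : ℝ) - 2) + 2 := by rw [habsk]; ring
    rw [hbase]
    have hkN : N + 2 ≤ k := by
      obtain ⟨t, ht⟩ := hke.sub hNe; omega
    have htail := tail_sum (s := q) (m := (k : ℝ) - (N : ℝ) - 2) hq (by exact_mod_cast (by omega : (0:ℤ) ≤ k - N - 2))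
    refine le_trans (tsum_le_of_inj (i := fun n : ℕ => N - 2 * (n : ℤ))
      (fun a b hab => by dsimp only at hab; omega) ?_
      (fun n => ENNReal.ofReal ((((k : ℝ) - (N : ℝ) - 2) + 2 * (n : ℝ) + 2) ^ (-q))) ?_) htail
    · intro j hj
      have hc : Even j ∧ |j| ≤ N := by
        by_contra hc; rw [if_neg hc] at hj; exact hj rfl
      obtain ⟨hj1, hj2⟩ := abs_le.1 hc.2
      obtain ⟨t, ht⟩ := hNe.sub hc.1
      refine ⟨t.toNat, ?_⟩
      have : (t.toNat : ℤ) = t := Int.toNat_of_nonneg (by omega)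
      dsimp only; omega
    · intro n
      by_cases hcond : Even (N - 2 * (n : ℤ)) ∧ |N - 2 * (n : ℤ)| ≤ N
      · rw [if_pos hcond]
        apply le_of_eq
        have habs : ((|N - 2 * (n : ℤ) - k| : ℤ) : ℝ)
            = ((k : ℝ) - (N : ℝ) - 2) + 2 * (n : ℝ) + 2 := by
          rw [abs_of_nonpos (by omega)]; push_cast; ring
        rw [habs]
      · rw [if_neg hcond]; exact zero_le
  · -- k < -N
    have hkneg : k < -N := by omega
    have habsk : ((|k| : ℤ) : ℝ) = -(k : ℝ) := by
      rw [abs_of_nonpos (by omega)]; push_cast; ring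
    have hbase : ((|k| : ℤ) : ℝ) - (N : ℝ) = (-(k : ℝ) - (N : ℝ) - 2) + 2 := by rw [habsk]; ring
    rw [hbase]
    have hkN : k ≤ -N - 2 := by
      obtain ⟨t, ht⟩ := hke.add hNe; omega
    have htail := tail_sum (s := q) (m := -(k : ℝ) - (N : ℝ) - 2) hq (by exact_mod_cast (by omega : (0:ℤ) ≤ -k - N - 2))
    refine le_trans (tsum_le_of_inj (i := fun n : ℕ => -N + 2 * (n : ℤ))
      (fun a b hab => by dsimp only at hab; omega) ?_
      (fun n => ENNReal.ofReal (((-(k : ℝ) - (N : ℝ) - 2) + 2 * (n : ℝ) + 2) ^ (-q))) ?_) htail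
    · intro j hj
      have hc : Even j ∧ |j| ≤ N := by
        by_contra hc; rw [if_neg hc] at hj; exact hj rfl
      obtain ⟨hj1, hj2⟩ := abs_le.1 hc.2
      obtain ⟨t, ht⟩ := hc.1.add hNe
      refine ⟨t.toNat, ?_⟩
      have : (t.toNat : ℤ) = t := Int.toNat_of_nonneg (by omega)
      dsimp only; omega
    · intro n
      by_cases hcond : Even (-N + 2 * (n : ℤ)) ∧ |(-N + 2 * (n : ℤ))| ≤ N
      · rw [if_pos hcond]
        apply le_of_eq
        have habs : ((|(-N + 2 * (n : ℤ)) - k| : ℤ) : ℝ)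
            = (-(k : ℝ) - (N : ℝ) - 2) + 2 * (n : ℝ) + 2 := by
          rw [abs_of_nonneg (by omega)]; push_cast; ring
        rw [habs]
      · rw [if_neg hcond]; exact zero_le

noncomputable def cqc (q : ℝ) : ℝ := 1 + 1 / (2 * (q - 1))
noncomputable def c1 (q : ℝ) : ℝ := cqc q ^ (1 / q)
noncomputable def c0 (p : ℝ) : ℝ := (1 + 1 / (2 * (2 / p - 1))) * ((0 : ℝ) + 2) ^ (1 - 2 / p)

lemma cqc_nonneg {q : ℝ} (hq : 1 < q) : 0 ≤ cqc q := by
  unfold cqc; have : 0 < q - 1 := by linarith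
  positivity

lemma c1_nonneg {q : ℝ} (hq : 1 < q) : 0 ≤ c1 q := Real.rpow_nonneg (cqc_nonneg hq) _

lemma c0_nonneg {p : ℝ} (hp : 1 < 2 / p) : 0 ≤ c0 p := by
  unfold c0; have : 0 < 2 / p - 1 := by linarith
  positivity

lemma hqp_of {p q : ℝ} (hpq : Real.HolderConjugate p q) : (1 - q) * (1 / q) = -(1 / p) := by
  have hq0 : q ≠ 0 := hpq.symm.ne_zero
  have hp0 : p ≠ 0 := hpq.ne_zero
  have h := hpq.inv_add_inv_eq_one
  field_simp at h ⊢
  nlinarith [h]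

lemma rpow_step {q a pinv cqv : ℝ} (hcq : 0 ≤ cqv) (ha : 0 ≤ a)
    (hqp : (1 - q) * (1 / q) = -pinv) :
    (cqv * a ^ (1 - q)) ^ (1 / q) = cqv ^ (1 / q) * a ^ (-pinv) := by
  rw [Real.mul_rpow hcq (Real.rpow_nonneg ha _), ← Real.rpow_mul ha, hqp]

lemma sq_rpow {a e : ℝ} (ha : 0 ≤ a) : (a ^ e) ^ 2 = a ^ (2 * e) := by
  rw [← Real.rpow_natCast (a ^ e) 2, ← Real.rpow_mul ha]
  congr 1; push_cast; ring

lemma ofReal_add_sq {c x y : ℝ} (hc : 0 ≤ c) (hx : 0 ≤ x) (hy : 0 ≤ y) :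
    (ENNReal.ofReal (c * x) + ENNReal.ofReal (c * y)) ^ (2 : ℝ)
      ≤ ENNReal.ofReal (2 * c ^ 2 * x ^ 2) + ENNReal.ofReal (2 * c ^ 2 * y ^ 2) := by
  rw [← ENNReal.ofReal_add (by positivity) (by positivity),
    ENNReal.ofReal_rpow_of_nonneg (by positivity) (by norm_num),
    ← ENNReal.ofReal_add (by positivity) (by positivity)]
  apply ENNReal.ofReal_le_ofReal
  have h2 : (c * x + c * y) ^ (2 : ℝ) = (c * x + c * y) ^ 2 := by
    rw [← Real.rpow_natCast (c * x + c * y) 2]; norm_num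
  rw [h2]
  nlinarith [sq_nonneg (c * x - c * y)]

lemma hA1_lemma {p q : ℝ} (hpq : Real.HolderConjugate p q) {N k : ℤ} (hN : 0 ≤ N)
    (hNe : Even N) (hke : Even k) (hk : |k| ≤ N) :
    (∑' j : ℤ, if Even j ∧ N < |j| then ENNReal.ofReal (((|j - k| : ℤ) : ℝ) ^ (-q)) else 0) ^ (1 / q)
      ≤ ENNReal.ofReal (c1 q * ((N : ℝ) - (k : ℝ) + 2) ^ (-(1 / p)))
        + ENNReal.ofReal (c1 q * ((N : ℝ) + (k : ℝ) + 2) ^ (-(1 / p))) := by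
  have hq := hpq.symm.lt
  have hq0 : (0 : ℝ) ≤ 1 / q := one_div_nonneg.2 hpq.symm.nonneg
  have hq1 : 1 / q ≤ 1 := by rw [div_le_one hpq.symm.pos]; linarith
  have hcq := cqc_nonneg hq
  have hkr : |(k : ℝ)| ≤ (N : ℝ) := by exact_mod_cast hk
  obtain ⟨hk1, hk2⟩ := abs_le.1 hkr
  have ha : (0 : ℝ) ≤ (N : ℝ) - (k : ℝ) + 2 := by linarith
  have hb : (0 : ℝ) ≤ (N : ℝ) + (k : ℝ) + 2 := by linarith
  refine le_trans (ENNReal.rpow_le_rpow (tail1 hq hN hNe hke hk) hq0) ?_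
  refine le_trans (ENNReal.rpow_add_le_add_rpow _ _ hq0 hq1) ?_
  apply add_le_add
  · rw [ENNReal.ofReal_rpow_of_nonneg (by positivity) hq0]
    exact le_of_eq (congrArg _ (rpow_step hcq ha (hqp_of hpq)))
  · rw [ENNReal.ofReal_rpow_of_nonneg (by positivity) hq0]
    exact le_of_eq (congrArg _ (rpow_step hcq hb (hqp_of hpq)))

lemma hA2_lemma {p q : ℝ} (hpq : Real.HolderConjugate p q) {N k : ℤ} (hN : 0 ≤ N)
    (hNe : Even N) (hke : Even k) (hk : N < |k|) :
    (∑' j : ℤ, if Even j ∧ |j| ≤ N then ENNReal.ofReal (((|j - k| : ℤ) : ℝ) ^ (-q)) else 0) ^ (1 / q)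
      ≤ ENNReal.ofReal (c1 q * (((|k| : ℤ) : ℝ) - (N : ℝ)) ^ (-(1 / p))) := by
  have hq := hpq.symm.lt
  have hq0 : (0 : ℝ) ≤ 1 / q := one_div_nonneg.2 hpq.symm.nonneg
  have hcq := cqc_nonneg hq
  have ha : (0 : ℝ) ≤ ((|k| : ℤ) : ℝ) - (N : ℝ) := by
    have : (N : ℝ) ≤ ((|k| : ℤ) : ℝ) := by exact_mod_cast le_of_lt hk
    linarith
  refine le_trans (ENNReal.rpow_le_rpow (tail2 hq hN hNe hke hk) hq0) ?_
  rw [ENNReal.ofReal_rpow_of_nonneg (by positivity) hq0]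
  exact le_of_eq (congrArg _ (rpow_step hcq ha (hqp_of hpq)))



lemma ite_abs_split {N : ℤ} (hN : 0 ≤ N) (X : ℤ → ℝ≥0∞) (k : ℤ) :
    (if Even k ∧ N < |k| then X k else 0)
      = (if Even k ∧ N < k then X k else 0) + (if Even k ∧ k < -N then X k else 0) := by
  by_cases hje : Even k
  · by_cases h1 : N < k
    · have hna : N < |k| := lt_of_lt_of_le h1 (le_abs_self k)
      have h2 : ¬ k < -N := by linarith
      rw [if_pos ⟨hje, hna⟩, if_pos ⟨hje, h1⟩, if_neg (fun hc => h2 hc.2), add_zero]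
    · by_cases h2 : k < -N
      · have hna : N < |k| := by rw [abs_of_nonpos (by linarith)]; linarith
        rw [if_pos ⟨hje, hna⟩, if_neg (fun hc => h1 hc.2), if_pos ⟨hje, h2⟩, zero_add]
      · have hna : ¬ N < |k| := by
          rcases abs_cases k with ⟨he, _⟩ | ⟨he, _⟩ <;> rw [he] <;> omega
        rw [if_neg (fun hc => hna hc.2), if_neg (fun hc => h1 hc.2),
          if_neg (fun hc => h2 hc.2), add_zero]
  · simp [hje]

lemma hS1_lemma {p q : ℝ} (hpq : Real.HolderConjugate p q) (hp2 : p < 2) {N : ℤ}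
    (hN : 0 ≤ N) (hNe : Even N) :
    (∑' k : ℤ, if Even k ∧ |k| ≤ N then
        (ENNReal.ofReal (c1 q * ((N : ℝ) - (k : ℝ) + 2) ^ (-(1 / p)))
          + ENNReal.ofReal (c1 q * ((N : ℝ) + (k : ℝ) + 2) ^ (-(1 / p)))) ^ (2 : ℝ) else 0)
      ≤ ENNReal.ofReal (4 * c1 q ^ 2 * c0 p) := by
  classical
  have hq := hpq.symm.lt
  have hs2p : 1 < 2 / p := (one_lt_div hpq.pos).2 hp2
  have hc1 := c1_nonneg hq
  have hc0 := c0_nonneg hs2p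
  have hptw : ∀ k : ℤ, (if Even k ∧ |k| ≤ N then
        (ENNReal.ofReal (c1 q * ((N : ℝ) - (k : ℝ) + 2) ^ (-(1 / p)))
          + ENNReal.ofReal (c1 q * ((N : ℝ) + (k : ℝ) + 2) ^ (-(1 / p)))) ^ (2 : ℝ) else 0)
      ≤ (if Even k ∧ |k| ≤ N then
            ENNReal.ofReal (2 * c1 q ^ 2 * ((N : ℝ) - (k : ℝ) + 2) ^ (-(2 / p))) else 0)
        + (if Even k ∧ |k| ≤ N then
            ENNReal.ofReal (2 * c1 q ^ 2 * ((N : ℝ) + (k : ℝ) + 2) ^ (-(2 / p))) else 0) := by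
    intro k
    by_cases hk : Even k ∧ |k| ≤ N
    · simp only [if_pos hk]
      have hkr : |(k : ℝ)| ≤ (N : ℝ) := by exact_mod_cast hk.2
      obtain ⟨hk1, hk2⟩ := abs_le.1 hkr
      have ha : (0 : ℝ) ≤ (N : ℝ) - (k : ℝ) + 2 := by linarith
      have hb : (0 : ℝ) ≤ (N : ℝ) + (k : ℝ) + 2 := by linarith
      refine le_trans (ofReal_add_sq hc1 (Real.rpow_nonneg ha _) (Real.rpow_nonneg hb _)) ?_
      apply add_le_add <;> apply ENNReal.ofReal_le_ofReal <;> apply le_of_eq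
      · rw [sq_rpow ha, show 2 * (-(1 / p)) = -(2 / p) by ring]
      · rw [sq_rpow hb, show 2 * (-(1 / p)) = -(2 / p) by ring]
    · simp only [if_neg hk]
      exact zero_le
  refine le_trans (le_trans (ENNReal.tsum_le_tsum hptw) (le_of_eq ENNReal.tsum_add)) ?_
  have bound1 : (∑' k : ℤ, if Even k ∧ |k| ≤ N then
      ENNReal.ofReal (2 * c1 q ^ 2 * ((N : ℝ) - (k : ℝ) + 2) ^ (-(2 / p))) else 0)
      ≤ ENNReal.ofReal (2 * c1 q ^ 2) * ENNReal.ofReal (c0 p) := by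
    have hcongr : ∀ k : ℤ, (if Even k ∧ |k| ≤ N then
        ENNReal.ofReal (2 * c1 q ^ 2 * ((N : ℝ) - (k : ℝ) + 2) ^ (-(2 / p))) else 0)
        = ENNReal.ofReal (2 * c1 q ^ 2)
          * (if Even k ∧ |k| ≤ N then ENNReal.ofReal (((N : ℝ) - (k : ℝ) + 2) ^ (-(2 / p))) else 0) := by
      intro k
      by_cases hk : Even k ∧ |k| ≤ N
      · rw [if_pos hk, if_pos hk, ENNReal.ofReal_mul (by positivity)]
      · rw [if_neg hk, if_neg hk, mul_zero]
    rw [tsum_congr hcongr, ENNReal.tsum_mul_left]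
    apply mul_le_mul_right
    refine le_trans (tsum_le_of_inj (i := fun n : ℕ => N - 2 * (n : ℤ))
      (fun a b hab => by dsimp only at hab; omega) ?_
      (fun n => ENNReal.ofReal (((0 : ℝ) + 2 * (n : ℝ) + 2) ^ (-(2 / p)))) ?_)
      (tail_sum hs2p le_rfl)
    · intro j hj
      have hc : Even j ∧ |j| ≤ N := by
        by_contra hc; rw [if_neg hc] at hj; exact hj rfl
      obtain ⟨hj1, hj2⟩ := abs_le.1 hc.2
      obtain ⟨t, ht⟩ := hNe.sub hc.1
      refine ⟨t.toNat, ?_⟩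
      have : (t.toNat : ℤ) = t := Int.toNat_of_nonneg (by omega)
      dsimp only; omega
    · intro n
      by_cases hcond : Even (N - 2 * (n : ℤ)) ∧ |N - 2 * (n : ℤ)| ≤ N
      · rw [if_pos hcond]
        apply le_of_eq
        have hbase : (N : ℝ) - (((N - 2 * (n : ℤ)) : ℤ) : ℝ) + 2 = (0 : ℝ) + 2 * (n : ℝ) + 2 := by
          push_cast; ring
        rw [hbase]
      · rw [if_neg hcond]; exact zero_le
  have bound2 : (∑' k : ℤ, if Even k ∧ |k| ≤ N then
      ENNReal.ofReal (2 * c1 q ^ 2 * ((N : ℝ) + (k : ℝ) + 2) ^ (-(2 / p))) else 0)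
      ≤ ENNReal.ofReal (2 * c1 q ^ 2) * ENNReal.ofReal (c0 p) := by
    have hcongr : ∀ k : ℤ, (if Even k ∧ |k| ≤ N then
        ENNReal.ofReal (2 * c1 q ^ 2 * ((N : ℝ) + (k : ℝ) + 2) ^ (-(2 / p))) else 0)
        = ENNReal.ofReal (2 * c1 q ^ 2)
          * (if Even k ∧ |k| ≤ N then ENNReal.ofReal (((N : ℝ) + (k : ℝ) + 2) ^ (-(2 / p))) else 0) := by
      intro k
      by_cases hk : Even k ∧ |k| ≤ N
      · rw [if_pos hk, if_pos hk, ENNReal.ofReal_mul (by positivity)]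
      · rw [if_neg hk, if_neg hk, mul_zero]
    rw [tsum_congr hcongr, ENNReal.tsum_mul_left]
    apply mul_le_mul_right
    refine le_trans (tsum_le_of_inj (i := fun n : ℕ => -N + 2 * (n : ℤ))
      (fun a b hab => by dsimp only at hab; omega) ?_
      (fun n => ENNReal.ofReal (((0 : ℝ) + 2 * (n : ℝ) + 2) ^ (-(2 / p)))) ?_)
      (tail_sum hs2p le_rfl)
    · intro j hj
      have hc : Even j ∧ |j| ≤ N := by
        by_contra hc; rw [if_neg hc] at hj; exact hj rfl
      obtain ⟨hj1, hj2⟩ := abs_le.1 hc.2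
      obtain ⟨t, ht⟩ := hc.1.add hNe
      refine ⟨t.toNat, ?_⟩
      have : (t.toNat : ℤ) = t := Int.toNat_of_nonneg (by omega)
      dsimp only; omega
    · intro n
      by_cases hcond : Even (-N + 2 * (n : ℤ)) ∧ |(-N + 2 * (n : ℤ))| ≤ N
      · rw [if_pos hcond]
        apply le_of_eq
        have hbase : (N : ℝ) + (((-N + 2 * (n : ℤ)) : ℤ) : ℝ) + 2 = (0 : ℝ) + 2 * (n : ℝ) + 2 := by
          push_cast; ring
        rw [hbase]
      · rw [if_neg hcond]; exact zero_le
  refine le_trans (add_le_add bound1 bound2) ?_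
  have h20 : (0 : ℝ) ≤ 2 * c1 q ^ 2 * c0 p := mul_nonneg (by positivity) hc0
  rw [← ENNReal.ofReal_mul (by positivity : (0 : ℝ) ≤ 2 * c1 q ^ 2),
    ← ENNReal.ofReal_add h20 h20]
  exact ENNReal.ofReal_le_ofReal (le_of_eq (by ring))

lemma hS2_lemma {p q : ℝ} (hpq : Real.HolderConjugate p q) (hp2 : p < 2) {N : ℤ}
    (hN : 0 ≤ N) (hNe : Even N) :
    (∑' k : ℤ, if Even k ∧ N < |k| then
        (ENNReal.ofReal (c1 q * (((|k| : ℤ) : ℝ) - (N : ℝ)) ^ (-(1 / p)))) ^ (2 : ℝ) else 0)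
      ≤ ENNReal.ofReal (4 * c1 q ^ 2 * c0 p) := by
  classical
  have hq := hpq.symm.lt
  have hs2p : 1 < 2 / p := (one_lt_div hpq.pos).2 hp2
  have hc1 := c1_nonneg hq
  have hc0 := c0_nonneg hs2p
  have hptw : ∀ k : ℤ, (if Even k ∧ N < |k| then
        (ENNReal.ofReal (c1 q * (((|k| : ℤ) : ℝ) - (N : ℝ)) ^ (-(1 / p)))) ^ (2 : ℝ) else 0)
      = (if Even k ∧ N < |k| then
          ENNReal.ofReal (c1 q ^ 2 * (((|k| : ℤ) : ℝ) - (N : ℝ)) ^ (-(2 / p))) else 0) := by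
    intro k
    by_cases hk : Even k ∧ N < |k|
    · simp only [if_pos hk]
      have ha : (0 : ℝ) ≤ ((|k| : ℤ) : ℝ) - (N : ℝ) := by
        have : (N : ℝ) ≤ ((|k| : ℤ) : ℝ) := by exact_mod_cast le_of_lt hk.2
        linarith
      rw [ENNReal.ofReal_rpow_of_nonneg (by positivity) (by norm_num)]
      congr 1
      have h2 : (c1 q * (((|k| : ℤ) : ℝ) - (N : ℝ)) ^ (-(1 / p))) ^ (2 : ℝ)
          = (c1 q * (((|k| : ℤ) : ℝ) - (N : ℝ)) ^ (-(1 / p))) ^ 2 := by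
        rw [← Real.rpow_natCast (c1 q * (((|k| : ℤ) : ℝ) - (N : ℝ)) ^ (-(1 / p))) 2]; norm_num
      rw [h2, mul_pow, sq_rpow ha, show 2 * (-(1 / p)) = -(2 / p) by ring]
    · simp only [if_neg hk]
  rw [tsum_congr hptw]
  rw [tsum_congr (ite_abs_split hN
    (fun k => ENNReal.ofReal (c1 q ^ 2 * (((|k| : ℤ) : ℝ) - (N : ℝ)) ^ (-(2 / p)))))]
  rw [ENNReal.tsum_add]
  have bound1 : (∑' k : ℤ, if Even k ∧ N < k then
      ENNReal.ofReal (c1 q ^ 2 * (((|k| : ℤ) : ℝ) - (N : ℝ)) ^ (-(2 / p))) else 0)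
      ≤ ENNReal.ofReal (c1 q ^ 2) * ENNReal.ofReal (c0 p) := by
    have hcongr : ∀ k : ℤ, (if Even k ∧ N < k then
        ENNReal.ofReal (c1 q ^ 2 * (((|k| : ℤ) : ℝ) - (N : ℝ)) ^ (-(2 / p))) else 0)
        = ENNReal.ofReal (c1 q ^ 2)
          * (if Even k ∧ N < k then ENNReal.ofReal ((((|k| : ℤ) : ℝ) - (N : ℝ)) ^ (-(2 / p))) else 0) := by
      intro k
      by_cases hk : Even k ∧ N < k
      · rw [if_pos hk, if_pos hk, ENNReal.ofReal_mul (by positivity)]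
      · rw [if_neg hk, if_neg hk, mul_zero]
    rw [tsum_congr hcongr, ENNReal.tsum_mul_left]
    apply mul_le_mul_right
    refine le_trans (tsum_le_of_inj (i := fun n : ℕ => N + 2 * (n : ℤ) + 2)
      (fun a b hab => by dsimp only at hab; omega) ?_
      (fun n => ENNReal.ofReal (((0 : ℝ) + 2 * (n : ℝ) + 2) ^ (-(2 / p)))) ?_)
      (tail_sum hs2p le_rfl)
    · intro j hj
      have hc : Even j ∧ N < j := by
        by_contra hc; rw [if_neg hc] at hj; exact hj rfl
      obtain ⟨t, ht⟩ := hc.1.sub hNe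
      have ht1 : 1 ≤ t := by omega
      refine ⟨(t - 1).toNat, ?_⟩
      have : ((t - 1).toNat : ℤ) = t - 1 := Int.toNat_of_nonneg (by omega)
      dsimp only; omega
    · intro n
      have hcond : Even (N + 2 * (n : ℤ) + 2) ∧ N < N + 2 * (n : ℤ) + 2 := by
        obtain ⟨t, ht⟩ := hNe
        exact ⟨⟨t + n + 1, by omega⟩, by omega⟩
      rw [if_pos hcond]
      apply le_of_eq
      have habs : (((|N + 2 * (n : ℤ) + 2| : ℤ) : ℝ)) - (N : ℝ) = (0 : ℝ) + 2 * (n : ℝ) + 2 := by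
        rw [abs_of_nonneg (by omega : (0:ℤ) ≤ N + 2 * (n : ℤ) + 2)]
        push_cast; ring
      rw [habs]
  have bound2 : (∑' k : ℤ, if Even k ∧ k < -N then
      ENNReal.ofReal (c1 q ^ 2 * (((|k| : ℤ) : ℝ) - (N : ℝ)) ^ (-(2 / p))) else 0)
      ≤ ENNReal.ofReal (c1 q ^ 2) * ENNReal.ofReal (c0 p) := by
    have hcongr : ∀ k : ℤ, (if Even k ∧ k < -N then
        ENNReal.ofReal (c1 q ^ 2 * (((|k| : ℤ) : ℝ) - (N : ℝ)) ^ (-(2 / p))) else 0)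
        = ENNReal.ofReal (c1 q ^ 2)
          * (if Even k ∧ k < -N then ENNReal.ofReal ((((|k| : ℤ) : ℝ) - (N : ℝ)) ^ (-(2 / p))) else 0) := by
      intro k
      by_cases hk : Even k ∧ k < -N
      · rw [if_pos hk, if_pos hk, ENNReal.ofReal_mul (by positivity)]
      · rw [if_neg hk, if_neg hk, mul_zero]
    rw [tsum_congr hcongr, ENNReal.tsum_mul_left]
    apply mul_le_mul_right
    refine le_trans (tsum_le_of_inj (i := fun n : ℕ => -N - 2 * (n : ℤ) - 2)
      (fun a b hab => by dsimp only at hab; omega) ?_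
      (fun n => ENNReal.ofReal (((0 : ℝ) + 2 * (n : ℝ) + 2) ^ (-(2 / p)))) ?_)
      (tail_sum hs2p le_rfl)
    · intro j hj
      have hc : Even j ∧ j < -N := by
        by_contra hc; rw [if_neg hc] at hj; exact hj rfl
      obtain ⟨t, ht⟩ := hc.1.add hNe
      have ht1 : t ≤ -1 := by omega
      refine ⟨(-t - 1).toNat, ?_⟩
      have : ((-t - 1).toNat : ℤ) = -t - 1 := Int.toNat_of_nonneg (by omega)
      dsimp only; omega
    · intro n
      have hcond : Even (-N - 2 * (n : ℤ) - 2) ∧ -N - 2 * (n : ℤ) - 2 < -N := by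
        obtain ⟨t, ht⟩ := hNe
        exact ⟨⟨-t - n - 1, by omega⟩, by omega⟩
      rw [if_pos hcond]
      apply le_of_eq
      have habs : (((|(-N - 2 * (n : ℤ) - 2)| : ℤ) : ℝ)) - (N : ℝ) = (0 : ℝ) + 2 * (n : ℝ) + 2 := by
        rw [abs_of_nonpos (by omega : -N - 2 * (n : ℤ) - 2 ≤ 0)]
        push_cast; ring
      rw [habs]
  refine le_trans (add_le_add bound1 bound2) ?_
  have h10 : (0 : ℝ) ≤ c1 q ^ 2 * c0 p := mul_nonneg (by positivity) hc0
  rw [← ENNReal.ofReal_mul (by positivity : (0 : ℝ) ≤ c1 q ^ 2),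
    ← ENNReal.ofReal_add h10 h10]
  refine ENNReal.ofReal_le_ofReal (by nlinarith)

end Stmt6Aux

open Stmt6Aux

/-- For every `p ∈ (1,2)` there is `C(p) > 0` such that for all
nonnegative sequences `r ∈ ℓᵖ(2ℤ)`, `g ∈ ℓ²(2ℤ)` and every even `N ≥ 0`,
`σ₁(N) ≤ C(p)‖r‖_p‖g‖` and `σ₂(N) ≤ C(p)‖r‖_p‖g‖`. -/
theorem stmt6 (p : ℝ) (hp1 : 1 < p) (hp2 : p < 2) :
    ∃ C > 0, ∀ r g : ℤ → ℝ, (∀ k, 0 ≤ r k) → (∀ k, 0 ≤ g k) →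
      (Summable fun k : ℤ => if Even k then r k ^ p else 0) →
      (Summable fun k : ℤ => if Even k then g k ^ 2 else 0) →
      ∀ N : ℤ, 0 ≤ N → Even N →
        sigma1 r g N ≤ C * evenLpNorm r p * evenL2Norm g ∧
        sigma2 r g N ≤ C * evenLpNorm r p * evenL2Norm g := by
  classical
  set q : ℝ := Real.conjExponent p with hqdef
  have hpq : p.HolderConjugate q := Real.HolderConjugate.conjExponent hp1
  have hq := hpq.symm.lt
  have hs2p : 1 < 2 / p := (one_lt_div hpq.pos).2 hp2
  have hc1 := c1_nonneg hq
  have hc0 := c0_nonneg hs2p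
  have hsnn : (0 : ℝ) ≤ 4 * c1 q ^ 2 * c0 p := mul_nonneg (by positivity) hc0
  set Creal : ℝ := 1 + (4 * c1 q ^ 2 * c0 p) ^ (1 / (2 : ℝ)) with hCdef
  have hCpos : 0 < Creal := by
    have := Real.rpow_nonneg hsnn (1 / (2 : ℝ)); rw [hCdef]; linarith
  refine ⟨Creal, hCpos, ?_⟩
  intro r g hr0 hg0 hr hg N hN hNe
  -- nonnegativity facts
  have hnnr : ∀ m : ℤ, 0 ≤ (if Even m then r m ^ p else 0) := by
    intro m; by_cases hm : Even m
    · rw [if_pos hm]; exact Real.rpow_nonneg (hr0 m) p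
    · rw [if_neg hm]
  have hnng : ∀ m : ℤ, 0 ≤ (if Even m then g m ^ 2 else 0) := by
    intro m; by_cases hm : Even m
    · rw [if_pos hm]; positivity
    · rw [if_neg hm]
  have hLpnn : 0 ≤ evenLpNorm r p := Real.rpow_nonneg (tsum_nonneg hnnr) _
  have hL2nn : 0 ≤ evenL2Norm g := Real.sqrt_nonneg _
  have hRHSnn : 0 ≤ Creal * evenLpNorm r p * evenL2Norm g :=
    mul_nonneg (mul_nonneg hCpos.le hLpnn) hL2nn
  -- norm identities
  have hLp : (∑' m : ℤ, if Even m then (ENNReal.ofReal (r m)) ^ p else 0) ^ (1 / p)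
      = ENNReal.ofReal (evenLpNorm r p) := by
    have h1 : (fun m : ℤ => if Even m then (ENNReal.ofReal (r m)) ^ p else 0)
        = fun m : ℤ => ENNReal.ofReal (if Even m then r m ^ p else 0) := by
      funext m; by_cases hm : Even m
      · rw [if_pos hm, if_pos hm, ENNReal.ofReal_rpow_of_nonneg (hr0 m) hpq.nonneg]
      · rw [if_neg hm, if_neg hm, ENNReal.ofReal_zero]
    rw [h1, ← ENNReal.ofReal_tsum_of_nonneg hnnr hr,
      ENNReal.ofReal_rpow_of_nonneg (tsum_nonneg hnnr) (one_div_nonneg.2 hpq.nonneg)]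
    rfl
  have hL2 : (∑' k : ℤ, if Even k then (ENNReal.ofReal (g k)) ^ (2 : ℝ) else 0) ^ (1 / (2 : ℝ))
      = ENNReal.ofReal (evenL2Norm g) := by
    have h1 : (fun m : ℤ => if Even m then (ENNReal.ofReal (g m)) ^ (2 : ℝ) else 0)
        = fun m : ℤ => ENNReal.ofReal (if Even m then g m ^ 2 else 0) := by
      funext m; by_cases hm : Even m
      · rw [if_pos hm, if_pos hm, ENNReal.ofReal_rpow_of_nonneg (hg0 m) (by norm_num)]
        congr 1
        rw [← Real.rpow_natCast (g m) 2]; norm_num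
      · rw [if_neg hm, if_neg hm, ENNReal.ofReal_zero]
    rw [h1, ← ENNReal.ofReal_tsum_of_nonneg hnng hg,
      ENNReal.ofReal_rpow_of_nonneg (tsum_nonneg hnng) (by norm_num)]
    unfold evenL2Norm
    rw [Real.sqrt_eq_rpow]
  -- S^{1/2} bound
  have hSh : (ENNReal.ofReal (4 * c1 q ^ 2 * c0 p)) ^ (1 / (2 : ℝ)) ≤ ENNReal.ofReal Creal := by
    rw [ENNReal.ofReal_rpow_of_nonneg hsnn (by norm_num)]
    exact ENNReal.ofReal_le_ofReal (by rw [hCdef]; linarith)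
  have hfinal : ENNReal.ofReal (evenLpNorm r p)
      * (ENNReal.ofReal (evenL2Norm g) * (ENNReal.ofReal (4 * c1 q ^ 2 * c0 p)) ^ (1 / (2 : ℝ)))
      ≤ ENNReal.ofReal (Creal * evenLpNorm r p * evenL2Norm g) := by
    refine le_trans (mul_le_mul_right (mul_le_mul_right hSh _) _) ?_
    rw [← ENNReal.ofReal_mul hL2nn, ← ENNReal.ofReal_mul hLpnn]
    exact ENNReal.ofReal_le_ofReal (le_of_eq (by ring))
  constructor
  · -- sigma1
    by_cases hsum : Summable (fun kj : ℤ × ℤ =>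
        if Even kj.1 ∧ Even kj.2 ∧ |kj.1| ≤ N ∧ N < |kj.2|
          then r (kj.2 + kj.1) * g kj.1 / ((|kj.2 - kj.1| : ℤ) : ℝ) else 0)
    · have hFnn : ∀ kj : ℤ × ℤ, 0 ≤ (if Even kj.1 ∧ Even kj.2 ∧ |kj.1| ≤ N ∧ N < |kj.2|
          then r (kj.2 + kj.1) * g kj.1 / ((|kj.2 - kj.1| : ℤ) : ℝ) else 0) := by
        intro kj
        by_cases hc : Even kj.1 ∧ Even kj.2 ∧ |kj.1| ≤ N ∧ N < |kj.2|
        · rw [if_pos hc]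
          have : (0 : ℝ) ≤ ((|kj.2 - kj.1| : ℤ) : ℝ) := by exact_mod_cast abs_nonneg _
          exact div_nonneg (mul_nonneg (hr0 _) (hg0 _)) this
        · rw [if_neg hc]
      rw [sigma1, ← ENNReal.ofReal_le_ofReal_iff hRHSnn,
        ENNReal.ofReal_tsum_of_nonneg hFnn hsum]
      have hcong : ∀ kj : ℤ × ℤ, ENNReal.ofReal
          (if Even kj.1 ∧ Even kj.2 ∧ |kj.1| ≤ N ∧ N < |kj.2|
            then r (kj.2 + kj.1) * g kj.1 / ((|kj.2 - kj.1| : ℤ) : ℝ) else 0)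
          = (if Even kj.1 ∧ Even kj.2 ∧ |kj.1| ≤ N ∧ N < |kj.2|
            then ENNReal.ofReal (r (kj.2 + kj.1)) * ENNReal.ofReal (g kj.1)
              / ENNReal.ofReal ((|kj.2 - kj.1| : ℤ) : ℝ) else 0) := by
        intro kj
        by_cases hc : Even kj.1 ∧ Even kj.2 ∧ |kj.1| ≤ N ∧ N < |kj.2|
        · rw [if_pos hc, if_pos hc]
          have hne : kj.2 - kj.1 ≠ 0 := sub_ne_zero.2 (by
            intro e
            obtain ⟨_, _, h3, h4⟩ := hc
            rw [e] at h4
            exact absurd h4 (not_lt.2 h3))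
          have hd : (0 : ℝ) < ((|kj.2 - kj.1| : ℤ) : ℝ) := by exact_mod_cast abs_pos.2 hne
          rw [ENNReal.ofReal_div_of_pos hd, ENNReal.ofReal_mul (hr0 _)]
        · rw [if_neg hc, if_neg hc, ENNReal.ofReal_zero]
      rw [tsum_congr hcong]
      have hcore := core hpq (fun m => ENNReal.ofReal (r m)) (fun k => ENNReal.ofReal (g k))
        (fun k => |k| ≤ N) (fun j => N < |j|)
        (fun k j hPk hQj e => absurd (e ▸ hPk) (not_le.2 hQj))
        (fun k => ENNReal.ofReal (c1 q * ((N : ℝ) - (k : ℝ) + 2) ^ (-(1 / p)))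
          + ENNReal.ofReal (c1 q * ((N : ℝ) + (k : ℝ) + 2) ^ (-(1 / p))))
        (ENNReal.ofReal (4 * c1 q ^ 2 * c0 p))
        (fun k hke hkP => hA1_lemma hpq hN hNe hke hkP)
        (hS1_lemma hpq hp2 hN hNe)
      refine le_trans hcore ?_
      rw [hLp, hL2]
      exact hfinal
    · rw [sigma1, tsum_eq_zero_of_not_summable hsum]
      exact hRHSnn
  · -- sigma2
    by_cases hsum : Summable (fun kj : ℤ × ℤ =>
        if Even kj.1 ∧ Even kj.2 ∧ N < |kj.1| ∧ |kj.2| ≤ N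
          then r (kj.2 + kj.1) * g kj.1 / ((|kj.1 - kj.2| : ℤ) : ℝ) else 0)
    · have hFnn : ∀ kj : ℤ × ℤ, 0 ≤ (if Even kj.1 ∧ Even kj.2 ∧ N < |kj.1| ∧ |kj.2| ≤ N
          then r (kj.2 + kj.1) * g kj.1 / ((|kj.1 - kj.2| : ℤ) : ℝ) else 0) := by
        intro kj
        by_cases hc : Even kj.1 ∧ Even kj.2 ∧ N < |kj.1| ∧ |kj.2| ≤ N
        · rw [if_pos hc]
          have : (0 : ℝ) ≤ ((|kj.1 - kj.2| : ℤ) : ℝ) := by exact_mod_cast abs_nonneg _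
          exact div_nonneg (mul_nonneg (hr0 _) (hg0 _)) this
        · rw [if_neg hc]
      rw [sigma2, ← ENNReal.ofReal_le_ofReal_iff hRHSnn,
        ENNReal.ofReal_tsum_of_nonneg hFnn hsum]
      have hcong : ∀ kj : ℤ × ℤ, ENNReal.ofReal
          (if Even kj.1 ∧ Even kj.2 ∧ N < |kj.1| ∧ |kj.2| ≤ N
            then r (kj.2 + kj.1) * g kj.1 / ((|kj.1 - kj.2| : ℤ) : ℝ) else 0)
          = (if Even kj.1 ∧ Even kj.2 ∧ N < |kj.1| ∧ |kj.2| ≤ N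
            then ENNReal.ofReal (r (kj.2 + kj.1)) * ENNReal.ofReal (g kj.1)
              / ENNReal.ofReal ((|kj.2 - kj.1| : ℤ) : ℝ) else 0) := by
        intro kj
        by_cases hc : Even kj.1 ∧ Even kj.2 ∧ N < |kj.1| ∧ |kj.2| ≤ N
        · rw [if_pos hc, if_pos hc]
          have hne : kj.2 - kj.1 ≠ 0 := sub_ne_zero.2 (by
            intro e
            obtain ⟨_, _, h3, h4⟩ := hc
            rw [e] at h4
            exact absurd h4 (not_le.2 h3))
          have hd : (0 : ℝ) < ((|kj.2 - kj.1| : ℤ) : ℝ) := by exact_mod_cast abs_pos.2 hne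
          rw [abs_sub_comm kj.1 kj.2, ENNReal.ofReal_div_of_pos hd, ENNReal.ofReal_mul (hr0 _)]
        · rw [if_neg hc, if_neg hc, ENNReal.ofReal_zero]
      rw [tsum_congr hcong]
      have hcore := core hpq (fun m => ENNReal.ofReal (r m)) (fun k => ENNReal.ofReal (g k))
        (fun k => N < |k|) (fun j => |j| ≤ N)
        (fun k j hPk hQj e => absurd (e ▸ hQj) (not_le.2 (e ▸ hPk)))
        (fun k => ENNReal.ofReal (c1 q * (((|k| : ℤ) : ℝ) - (N : ℝ)) ^ (-(1 / p))))
        (ENNReal.ofReal (4 * c1 q ^ 2 * c0 p))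
        (fun k hke hkP => hA2_lemma hpq hN hNe hke hkP)
        (hS2_lemma hpq hp2 hN hNe)
      refine le_trans hcore ?_
      rw [hLp, hL2]
      exact hfinal
    · rw [sigma2, tsum_eq_zero_of_not_summable hsum]
      exact hRHSnn
end
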